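/- arXiv:1009.2463 — 3 statements merged into one kernel-verified Lean document; each statement's English description precedes it below -/
import Mathlib

section
/- Let f be a positive probability density function on [0,∞), continuous on [0,∞) and piecewise continuously differentiable, with hazard rate r(t) = f(t)/F̄(t), and fix 0 < t₁ < t₃. Assume that for every t > t₃ and every x with 0 < x < t one has r(t−x) ≥ r(t), with strict inequality whenever t − x < t₁. Let m be the renewal density, i.e., the solution of m(t) = f(t) + ∫₀ᵗ m(x) f(t−x) dx for t ≥ 0, and assume m′(x) < 0 for all x ∈ (0, t₃) and r′(t) ≤ 0 for t ≥ t₃. Then m′(t) < 0 for all t > t₃; in particular, m is strictly decreasing on [t₃, ∞). -/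
open MeasureTheory Set

/-- The survival function `F̄ t = ∫_t^∞ f x dx` of a density `f` on `[0, ∞)`. -/
noncomputable def survival (f : ℝ → ℝ) (t : ℝ) : ℝ := ∫ x in Set.Ioi t, f x

/-- The hazard rate `r t = f t / F̄ t`. -/
noncomputable def hazardRate (f : ℝ → ℝ) (t : ℝ) : ℝ := f t / survival f t

/-- `f` is piecewise continuously differentiable on `s`: off a locally finite exceptional
set `P`, it has a continuous derivative. -/
def PiecewiseC1On (f : ℝ → ℝ) (s : Set ℝ) : Prop :=
  ∃ P : Set ℝ, (∀ K : Set ℝ, IsCompact K → (P ∩ K).Finite) ∧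
    ∃ g : ℝ → ℝ, ContinuousOn g (s \ P) ∧ ∀ t ∈ s \ P, HasDerivAt f (g t) t


section RenewalProof

variable {f m : ℝ → ℝ} {t₁ t₃ : ℝ}

/-- Grönwall-type lemma: a nonnegative continuous function dominated by `C` times its own
integral starting at `A` vanishes. -/
private lemma my_gronwall {w : ℝ → ℝ} {A B C : ℝ} (hC : 0 ≤ C)
    (hw : Continuous w) (hnn : ∀ b, 0 ≤ w b)
    (hle : ∀ b ∈ Icc A B, w b ≤ C * ∫ y in A..b, w y) :
    ∀ b ∈ Icc A B, w b = 0 := by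
  intro b hb
  set W : ℝ → ℝ := fun x => ∫ y in A..x, w y with hWdef
  have hWd : ∀ x : ℝ, HasDerivAt W (w x) x := by
    intro x
    exact intervalIntegral.integral_hasDerivAt_right (hw.intervalIntegrable _ _)
      (hw.stronglyMeasurable.stronglyMeasurableAtFilter) hw.continuousAt
  have hWnn : ∀ x ∈ Icc A B, 0 ≤ W x := by
    intro x hx
    exact intervalIntegral.integral_nonneg hx.1 (fun u _ => hnn u)
  set φ : ℝ → ℝ := fun x => W x * Real.exp (-C * x) with hφdef
  have hφd : ∀ x : ℝ, HasDerivAt φ ((w x - C * W x) * Real.exp (-C * x)) x := by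
    intro x
    have h1 : HasDerivAt (fun y : ℝ => Real.exp (-C * y)) (-C * Real.exp (-C * x)) x := by
      have h2 := (Real.hasDerivAt_exp (-C * x)).comp x ((hasDerivAt_id x).const_mul (-C))
      have h3 : (fun y : ℝ => Real.exp (-C * y)) = Real.exp ∘ fun y : ℝ => -C * y := rfl
      rw [h3]
      exact h2.congr_deriv (by ring)
    have := (hWd x).mul h1
    refine this.congr_deriv ?_
    ring
  have hmono : AntitoneOn φ (Icc A B) := by
    apply antitoneOn_of_deriv_nonpos (convex_Icc A B)
    · exact fun x hx => ((hφd x).differentiableAt.continuousAt).continuousWithinAt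
    · exact fun x hx => (hφd x).differentiableAt.differentiableWithinAt
    · intro x hx
      rw [interior_Icc] at hx
      rw [(hφd x).deriv]
      apply mul_nonpos_of_nonpos_of_nonneg
      · have := hle x ⟨le_of_lt hx.1, le_of_lt hx.2⟩
        linarith
      · positivity
  have hφA : φ A = 0 := by simp [hφdef, hWdef]
  have hφb : φ b ≤ 0 := by
    have := hmono (left_mem_Icc.2 (hb.1.trans hb.2)) hb hb.1
    rwa [hφA] at this
  have hWb : W b = 0 := by
    have hφb' : W b * Real.exp (-C * b) ≤ 0 := hφb
    have hexp : 0 < Real.exp (-C * b) := Real.exp_pos _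
    have hWb' : W b ≤ 0 := nonpos_of_mul_nonpos_right (by linarith [hφb']) hexp
    exact le_antisymm hWb' (hWnn b hb)
  have h1 : w b ≤ C * W b := hle b hb
  rw [hWb] at h1
  have h0 : w b ≤ 0 := by linarith
  exact le_antisymm h0 (hnn b)

private lemma f_intInt (hf_int : IntegrableOn f (Set.Ici 0)) {a b : ℝ} (ha : 0 ≤ a) (hb : 0 ≤ b) :
    IntervalIntegrable f volume a b := by
  rw [intervalIntegrable_iff]
  apply hf_int.mono_set
  intro x hx
  rcases le_total a b with h | h
  · rw [uIoc_of_le h] at hx; exact le_of_lt (lt_of_le_of_lt ha hx.1)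
  · rw [uIoc_of_ge h] at hx; exact le_of_lt (lt_of_le_of_lt hb hx.1)

private lemma surv_eq_one_sub (hf_int : IntegrableOn f (Set.Ici 0))
    (hf_one : (∫ x in Set.Ici (0 : ℝ), f x) = 1) {t : ℝ} (ht : 0 ≤ t) :
    survival f t = 1 - ∫ x in (0 : ℝ)..t, f x := by
  have h1 : (∫ x in Ioi (0 : ℝ), f x) = 1 := by
    rw [← integral_Ici_eq_integral_Ioi]; exact hf_one
  have hdisj : Disjoint (Ioc (0 : ℝ) t) (Ioi t) :=
    (Set.Ioc_disjoint_Ioi le_rfl)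
  have hsplit : (∫ x in Ioi (0 : ℝ), f x) = (∫ x in Ioc 0 t, f x) + ∫ x in Ioi t, f x := by
    rw [← setIntegral_union hdisj measurableSet_Ioi
      (hf_int.mono_set (fun x hx => le_of_lt hx.1))
      (hf_int.mono_set (fun x hx => le_of_lt (lt_of_le_of_lt ht hx)))]
    rw [Ioc_union_Ioi_eq_Ioi ht]
  rw [intervalIntegral.integral_of_le ht]
  unfold survival
  linarith [h1, hsplit]

private lemma surv_pos (hf_pos : ∀ x ∈ Set.Ici (0 : ℝ), 0 < f x)
    (hf_int : IntegrableOn f (Set.Ici 0)) {t : ℝ} (ht : 0 ≤ t) : 0 < survival f t := by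
  unfold survival
  have hint : IntegrableOn f (Ioi t) :=
    hf_int.mono_set (fun x hx => le_of_lt (lt_of_le_of_lt ht hx))
  have hae : 0 ≤ᵐ[volume.restrict (Ioi t)] f := by
    refine (ae_restrict_iff' measurableSet_Ioi).2 ?_
    exact Filter.Eventually.of_forall fun x hx => le_of_lt (hf_pos x (le_of_lt (lt_of_le_of_lt ht hx)))
  rw [setIntegral_pos_iff_support_of_nonneg_ae hae hint]
  have hsub : Ioi t ⊆ Function.support f ∩ Ioi t := by
    intro x hx
    exact ⟨ne_of_gt (hf_pos x (le_of_lt (lt_of_le_of_lt ht hx))), hx⟩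
  calc (0 : ENNReal) < volume (Ioi t) := by simp
  _ ≤ volume (Function.support f ∩ Ioi t) := measure_mono hsub

private lemma surv_antitone (hf_pos : ∀ x ∈ Set.Ici (0 : ℝ), 0 < f x)
    (hf_int : IntegrableOn f (Set.Ici 0))
    (hf_one : (∫ x in Set.Ici (0 : ℝ), f x) = 1) {s t : ℝ} (hs : 0 ≤ s) (hst : s ≤ t) :
    survival f t ≤ survival f s := by
  rw [surv_eq_one_sub hf_int hf_one hs, surv_eq_one_sub hf_int hf_one (hs.trans hst)]
  have hadd : (∫ x in (0:ℝ)..s, f x) + (∫ x in s..t, f x) = ∫ x in (0:ℝ)..t, f x :=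
    intervalIntegral.integral_add_adjacent_intervals (f_intInt hf_int le_rfl hs)
      (f_intInt hf_int hs (hs.trans hst))
  have hnn : 0 ≤ ∫ x in s..t, f x :=
    intervalIntegral.integral_nonneg hst (fun u hu => le_of_lt (hf_pos u (hs.trans hu.1)))
  linarith

private lemma surv_le_one (hf_pos : ∀ x ∈ Set.Ici (0 : ℝ), 0 < f x)
    (hf_int : IntegrableOn f (Set.Ici 0))
    (hf_one : (∫ x in Set.Ici (0 : ℝ), f x) = 1) {t : ℝ} (ht : 0 ≤ t) :
    survival f t ≤ 1 := by
  have h0 : survival f 0 = 1 := by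
    rw [surv_eq_one_sub hf_int hf_one le_rfl]; simp
  rw [← h0]
  exact surv_antitone hf_pos hf_int hf_one le_rfl ht

private lemma cum_nonneg (hf_pos : ∀ x ∈ Set.Ici (0 : ℝ), 0 < f x)
    {t : ℝ} (ht : 0 ≤ t) : 0 ≤ ∫ x in (0 : ℝ)..t, f x :=
  intervalIntegral.integral_nonneg ht (fun u hu => le_of_lt (hf_pos u hu.1))

private lemma cum_le_one (hf_pos : ∀ x ∈ Set.Ici (0 : ℝ), 0 < f x)
    (hf_int : IntegrableOn f (Set.Ici 0))
    (hf_one : (∫ x in Set.Ici (0 : ℝ), f x) = 1) {t : ℝ} (ht : 0 ≤ t) :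
    (∫ x in (0 : ℝ)..t, f x) ≤ 1 := by
  have := surv_pos hf_pos hf_int ht
  rw [surv_eq_one_sub hf_int hf_one ht] at this
  linarith

private lemma surv_contOn (hf_int : IntegrableOn f (Set.Ici 0))
    (hf_one : (∫ x in Set.Ici (0 : ℝ), f x) = 1) :
    ContinuousOn (survival f) (Set.Ici 0) := by
  intro t ht
  have hB : (t : ℝ) < t + 1 := by linarith
  have hprim : ContinuousOn (fun x => ∫ u in Ioc (0:ℝ) x, f u) (Icc 0 (t + 1)) :=
    intervalIntegral.continuousOn_primitive (hf_int.mono_set Icc_subset_Ici_self)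
  have hg : ContinuousOn (fun x => 1 - ∫ u in Ioc (0:ℝ) x, f u) (Icc 0 (t + 1)) :=
    continuousOn_const.sub hprim
  have hmem : Icc (0:ℝ) (t + 1) ∈ nhdsWithin t (Set.Ici 0) := by
    apply mem_nhdsWithin.2
    exact ⟨Iio (t + 1), isOpen_Iio, hB, fun x hx => ⟨hx.2, le_of_lt hx.1⟩⟩
  have hcw : ContinuousWithinAt (fun x => 1 - ∫ u in Ioc (0:ℝ) x, f u) (Set.Ici 0) t := by
    apply (hg.continuousWithinAt (⟨ht, le_of_lt hB⟩ : t ∈ Icc (0:ℝ) (t+1))).mono_of_mem_nhdsWithin hmem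
  apply hcw.congr
  · intro y hy
    rw [surv_eq_one_sub hf_int hf_one hy, intervalIntegral.integral_of_le hy]
  · rw [surv_eq_one_sub hf_int hf_one ht, intervalIntegral.integral_of_le ht]

private lemma haz_mul (hf_pos : ∀ x ∈ Set.Ici (0 : ℝ), 0 < f x)
    (hf_int : IntegrableOn f (Set.Ici 0)) {t : ℝ} (ht : 0 ≤ t) :
    hazardRate f t * survival f t = f t :=
  div_mul_cancel₀ _ (ne_of_gt (surv_pos hf_pos hf_int ht))

private lemma haz_pos (hf_pos : ∀ x ∈ Set.Ici (0 : ℝ), 0 < f x)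
    (hf_int : IntegrableOn f (Set.Ici 0)) {t : ℝ} (ht : 0 ≤ t) :
    0 < hazardRate f t :=
  div_pos (hf_pos t ht) (surv_pos hf_pos hf_int ht)


private lemma m_intInt (hm_loc : LocallyIntegrableOn m (Set.Ici 0))
    {a b : ℝ} (ha : 0 ≤ a) (hb : 0 ≤ b) : IntervalIntegrable m volume a b := by
  rw [intervalIntegrable_iff]
  have h1 : IntegrableOn m (Icc 0 (max a b)) :=
    hm_loc.integrableOn_compact_subset (Icc_subset_Ici_self) isCompact_Icc
  apply h1.mono_set
  intro x hx
  constructor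
  · rcases le_total a b with h | h
    · rw [uIoc_of_le h] at hx; exact le_of_lt (lt_of_le_of_lt ha hx.1)
    · rw [uIoc_of_ge h] at hx; exact le_of_lt (lt_of_le_of_lt hb hx.1)
  · rcases le_total a b with h | h
    · rw [uIoc_of_le h] at hx; exact hx.2.trans (le_max_right a b)
    · rw [uIoc_of_ge h] at hx; exact hx.2.trans (le_max_left a b)

private lemma m_refl_intInt (hm_loc : LocallyIntegrableOn m (Set.Ici 0))
    {c a b : ℝ} (ha : a ∈ Icc 0 c) (hb : b ∈ Icc 0 c) :
    IntervalIntegrable (fun x => m (c - x)) volume a b := by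
  have h1 : IntervalIntegrable m volume (c - a) (c - b) :=
    m_intInt hm_loc (by linarith [ha.2]) (by linarith [hb.2])
  have h2 := h1.comp_sub_left c
  simpa using h2

/-- interval integrability of `x ↦ g x * m (c - x)` for `g` continuous on `[0,c]`. -/
private lemma gm_intInt (hm_loc : LocallyIntegrableOn m (Set.Ici 0))
    {c a b : ℝ} (ha : a ∈ Icc 0 c) (hb : b ∈ Icc 0 c)
    {g : ℝ → ℝ} (hg : ContinuousOn g (Icc 0 c)) :
    IntervalIntegrable (fun x => g x * m (c - x)) volume a b := by
  apply (m_refl_intInt hm_loc ha hb).continuousOn_mul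
  apply hg.mono
  intro x hx
  rcases le_total a b with h | h
  · rw [uIcc_of_le h] at hx; exact ⟨ha.1.trans hx.1, hx.2.trans hb.2⟩
  · rw [uIcc_of_ge h] at hx; exact ⟨hb.1.trans hx.1, hx.2.trans ha.2⟩

/-- interval integrability of `x ↦ m x * g (c - x)` for `g` continuous on `[0,c]`. -/
private lemma mg_intInt (hm_loc : LocallyIntegrableOn m (Set.Ici 0))
    {c a b : ℝ} (ha : a ∈ Icc 0 c) (hb : b ∈ Icc 0 c)
    {g : ℝ → ℝ} (hg : ContinuousOn g (Icc 0 c)) :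
    IntervalIntegrable (fun x => m x * g (c - x)) volume a b := by
  apply (m_intInt hm_loc ha.1 hb.1).mul_continuousOn
  have hg2 : ContinuousOn (fun x => g (c - x)) (Icc 0 c) := by
    apply hg.comp (continuousOn_const.sub continuousOn_id)
    intro x hx
    show c - x ∈ Icc 0 c
    exact ⟨by linarith [hx.2], by linarith [hx.1]⟩
  apply hg2.mono
  intro x hx
  rcases le_total a b with h | h
  · rw [uIcc_of_le h] at hx; exact ⟨ha.1.trans hx.1, hx.2.trans hb.2⟩
  · rw [uIcc_of_ge h] at hx; exact ⟨hb.1.trans hx.1, hx.2.trans ha.2⟩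

private lemma m_contOn (hm_diff : ∀ x : ℝ, 0 < x → DifferentiableAt ℝ m x) :
    ContinuousOn m (Set.Ioi 0) :=
  fun x hx => ((hm_diff x hx).continuousAt).continuousWithinAt

private lemma m_zero_eq (hm_eq : ∀ t ∈ Set.Ici (0 : ℝ), m t = f t + ∫ x in (0 : ℝ)..t, m x * f (t - x)) :
    m 0 = f 0 := by
  have := hm_eq 0 Set.self_mem_Ici
  simpa using this

private lemma m_pos (hf_pos : ∀ x ∈ Set.Ici (0 : ℝ), 0 < f x)
    (hf_cont : ContinuousOn f (Set.Ici 0))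
    (hm_loc : LocallyIntegrableOn m (Set.Ici 0))
    (hm_eq : ∀ t ∈ Set.Ici (0 : ℝ), m t = f t + ∫ x in (0 : ℝ)..t, m x * f (t - x))
    (hm_diff : ∀ x : ℝ, 0 < x → DifferentiableAt ℝ m x) :
    ∀ {t : ℝ}, 0 ≤ t → 0 < m t := by
  intro t ht
  rcases eq_or_lt_of_le ht with h0 | ht'
  · rw [← h0, m_zero_eq hm_eq]; exact hf_pos 0 Set.self_mem_Ici
  by_contra hle
  push_neg at hle
  set B := t with hB
  have hB0 : (0 : ℝ) < B := ht'
  -- max of f on [0, B]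
  obtain ⟨xM, hxM, hmax⟩ := isCompact_Icc.exists_isMaxOn (⟨0, le_rfl, le_of_lt hB0⟩ : (Icc (0:ℝ) B).Nonempty)
    (hf_cont.mono (fun x hx => hx.1))
  set Cf := f xM with hCf
  have hCfpos : 0 < Cf := hf_pos xM hxM.1
  have hCfle : ∀ y ∈ Icc (0:ℝ) B, f y ≤ Cf := fun y hy => hmax hy
  -- min of f on [0, B]
  obtain ⟨xm, hxm, hmin⟩ := isCompact_Icc.exists_isMinOn (⟨0, le_rfl, le_of_lt hB0⟩ : (Icc (0:ℝ) B).Nonempty)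
    (hf_cont.mono (fun x hx => hx.1))
  set ef := f xm with hef
  have hefpos : 0 < ef := hf_pos xm hxm.1
  have hefle : ∀ y ∈ Icc (0:ℝ) B, ef ≤ f y := fun y hy => hmin hy
  -- primitive of |m|
  set P : ℝ → ℝ := fun s => ∫ x in Ioc (0:ℝ) s, |m x| with hP
  have hmint : IntegrableOn (fun x => |m x|) (Icc 0 B) :=
    (hm_loc.integrableOn_compact_subset Icc_subset_Ici_self isCompact_Icc).abs
  have hPcont : ContinuousOn P (Icc 0 B) := intervalIntegral.continuousOn_primitive hmint
  have hP0 : P 0 = 0 := by simp [hP]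
  -- choose δ
  have hcw : ContinuousWithinAt P (Icc 0 B) 0 := hPcont 0 ⟨le_rfl, le_of_lt hB0⟩
  rw [Metric.continuousWithinAt_iff] at hcw
  obtain ⟨δ₀, hδ₀, hδprop⟩ := hcw (ef / Cf) (by positivity)
  set δ := min (δ₀ / 2) B with hδ
  have hδpos : 0 < δ := lt_min (by linarith) hB0
  have hδB : δ ≤ B := min_le_right _ _
  -- positivity on (0, δ]
  have hpos_small : ∀ s ∈ Ioc (0:ℝ) δ, 0 < m s := by
    intro s hs
    have hs0 : 0 ≤ s := le_of_lt hs.1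
    have hsB : s ≤ B := hs.2.trans hδB
    have habs : |∫ x in (0:ℝ)..s, m x * f (s - x)| ≤ Cf * P s := by
      calc |∫ x in (0:ℝ)..s, m x * f (s - x)|
          ≤ ∫ x in (0:ℝ)..s, |m x * f (s - x)| :=
            intervalIntegral.abs_integral_le_integral_abs hs0
        _ ≤ ∫ x in (0:ℝ)..s, |m x| * Cf := by
            apply intervalIntegral.integral_mono_on hs0
            · exact (mg_intInt hm_loc ⟨le_rfl, hs0⟩ ⟨hs0, le_rfl⟩
                (hf_cont.mono (fun x hx => hx.1))).abs
            · exact ((m_intInt hm_loc le_rfl hs0).abs).mul_const Cf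
            · intro x hx
              rw [abs_mul]
              apply mul_le_mul_of_nonneg_left _ (abs_nonneg _)
              rw [abs_of_nonneg (le_of_lt (hf_pos _ (by linarith [hx.2] : (0:ℝ) ≤ s - x)))]
              exact hCfle _ ⟨by linarith [hx.2], by linarith [hx.1]⟩
        _ = Cf * P s := by
            rw [intervalIntegral.integral_mul_const, intervalIntegral.integral_of_le hs0]
            simp [hP, mul_comm]
    have hPs : P s < ef / Cf := by
      have := hδprop ⟨hs0, hsB⟩ (by
        rw [Real.dist_eq, sub_zero, abs_of_nonneg hs0]
        calc s ≤ δ := hs.2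
        _ < δ₀ := lt_of_le_of_lt (min_le_left _ _) (by linarith))
      rw [hP0, Real.dist_eq, sub_zero] at this
      calc P s ≤ |P s| := le_abs_self _
      _ < ef / Cf := this
    have hfs : ef ≤ f s := hefle s ⟨hs0, hsB⟩
    have := hm_eq s hs0
    have hCfPs : Cf * P s < ef := by
      have h2 : Cf * P s < Cf * (ef / Cf) := mul_lt_mul_of_pos_left hPs hCfpos
      rwa [mul_comm Cf (ef / Cf), div_mul_cancel₀ _ (ne_of_gt hCfpos)] at h2
    nlinarith [abs_nonneg (∫ x in (0:ℝ)..s, m x * f (s - x)), le_abs_self (-(∫ x in (0:ℝ)..s, m x * f (s - x))), habs, abs_neg (∫ x in (0:ℝ)..s, m x * f (s - x))]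
  -- first nonpositive point
  set Z := {s : ℝ | s ∈ Icc δ B ∧ m s ≤ 0} with hZ
  have hZne : Z.Nonempty := ⟨t, ⟨⟨hδB, le_rfl⟩, hle⟩⟩
  have hZclosed : IsClosed Z := by
    have h1 : ContinuousOn m (Icc δ B) :=
      (m_contOn hm_diff).mono (fun x hx => lt_of_lt_of_le hδpos hx.1)
    have h2 := h1.preimage_isClosed_of_isClosed isClosed_Icc (isClosed_Iic (a := (0:ℝ)))
    convert h2 using 1
    rfl
  have hZbdd : BddBelow Z := ⟨δ, fun s hs => hs.1.1⟩
  set τ := sInf Z with hτ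
  have hτZ : τ ∈ Z := hZclosed.csInf_mem hZne hZbdd
  have hτpos : 0 < τ := lt_of_lt_of_le hδpos hτZ.1.1
  have hmpos_lt : ∀ x ∈ Ioo (0:ℝ) τ, 0 < m x := by
    intro x hx
    rcases le_or_gt x δ with h | h
    · exact hpos_small x ⟨hx.1, h⟩
    · have hxZ : x ∉ Z := fun hmem => absurd (csInf_le hZbdd hmem) (not_le.2 hx.2)
      have : x ∈ Icc δ B := ⟨le_of_lt h, le_of_lt (lt_of_lt_of_le hx.2 hτZ.1.2)⟩
      by_contra hc
      push_neg at hc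
      exact hxZ ⟨this, hc⟩
  -- renewal equation at τ gives m τ > 0
  have hint_nonneg : 0 ≤ ∫ x in (0:ℝ)..τ, m x * f (τ - x) := by
    rw [intervalIntegral.integral_of_le (le_of_lt hτpos), integral_Ioc_eq_integral_Ioo]
    apply setIntegral_nonneg measurableSet_Ioo
    intro x hx
    apply mul_nonneg (le_of_lt (hmpos_lt x hx))
    exact le_of_lt (hf_pos _ (by linarith [hx.2] : (0:ℝ) ≤ τ - x))
  have := hm_eq τ (le_of_lt hτpos)
  have hfτ : 0 < f τ := hf_pos τ (le_of_lt hτpos)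
  have : 0 < m τ := by linarith
  linarith [hτZ.2]


/-- The cumulative distribution `Fc y = ∫_{(0,y]} f`. -/
private noncomputable def Fc (f : ℝ → ℝ) (y : ℝ) : ℝ := ∫ x in Ioc (0 : ℝ) y, f x

private lemma Fc_contOn (hf_int : IntegrableOn f (Set.Ici 0)) {B : ℝ} :
    ContinuousOn (Fc f) (Icc 0 B) :=
  intervalIntegral.continuousOn_primitive (hf_int.mono_set Icc_subset_Ici_self)

private lemma Fc_eq {y : ℝ} (hy : 0 ≤ y) : Fc f y = ∫ x in (0:ℝ)..y, f x :=
  (intervalIntegral.integral_of_le hy).symm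

/-- The key renewal identity `∫₀ᵗ m x F̄(t-x) dx = F t`. -/
private lemma renewal_Id
    (hf_meas : Measurable f)
    (hf_pos : ∀ x ∈ Set.Ici (0 : ℝ), 0 < f x)
    (hf_cont : ContinuousOn f (Set.Ici 0))
    (hf_int : IntegrableOn f (Set.Ici 0))
    (hf_one : (∫ x in Set.Ici (0 : ℝ), f x) = 1)
    (hm_loc : LocallyIntegrableOn m (Set.Ici 0))
    (hm_eq : ∀ t ∈ Set.Ici (0 : ℝ), m t = f t + ∫ x in (0 : ℝ)..t, m x * f (t - x))
    {t : ℝ} (ht : 0 ≤ t) :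
    (∫ x in (0:ℝ)..t, m x * survival f (t - x)) = ∫ x in (0:ℝ)..t, f x := by
  -- measure on [0,t]
  set μ := volume.restrict (Ioc (0:ℝ) t) with hμ
  have hμfin : IsFiniteMeasure μ := by
    constructor
    rw [hμ, Measure.restrict_apply_univ]
    exact measure_Ioc_lt_top
  -- bound for f on [0,t]
  obtain ⟨xM, hxM, hmax⟩ := isCompact_Icc.exists_isMaxOn (⟨0, le_rfl, ht⟩ : (Icc (0:ℝ) t).Nonempty)
    (hf_cont.mono (fun x hx => hx.1))
  set Cf := f xM with hCf
  have hCfle : ∀ y ∈ Icc (0:ℝ) t, f y ≤ Cf := fun y hy => hmax hy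
  have hCfnn : 0 ≤ Cf := le_of_lt (hf_pos xM hxM.1)
  -- m integrable on Ioc 0 t
  have hm_int : IntegrableOn m (Ioc 0 t) := by
    have := (m_intInt hm_loc le_rfl ht (a := 0) (b := t))
    rwa [intervalIntegrable_iff, uIoc_of_le ht] at this
  -- the kernel
  set G : ℝ → ℝ → ℝ := fun s x => (Iic s).indicator (fun x' => m x' * f (s - x')) x with hG
  -- joint integrability
  have hGmeas : AEStronglyMeasurable (Function.uncurry G) (μ.prod μ) := by
    have h1 : AEMeasurable (fun p : ℝ × ℝ => m p.2) (μ.prod μ) :=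
      (hm_int.aestronglyMeasurable.aemeasurable).comp_snd
    have h2 : AEMeasurable (fun p : ℝ × ℝ => f (p.1 - p.2)) (μ.prod μ) :=
      (hf_meas.comp (measurable_fst.sub measurable_snd)).aemeasurable
    have h3 : AEStronglyMeasurable (fun p : ℝ × ℝ => m p.2 * f (p.1 - p.2)) (μ.prod μ) := by
      rw [aestronglyMeasurable_iff_aemeasurable]
      exact h1.mul h2
    have h4 : MeasurableSet {p : ℝ × ℝ | p.2 ≤ p.1} := measurableSet_le measurable_snd measurable_fst
    have h5 := h3.indicator h4
    apply h5.congr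
    apply Filter.Eventually.of_forall
    intro p
    simp only [Function.uncurry, hG, Set.indicator_apply, Set.mem_Iic, Set.mem_setOf_eq]
  have hGint : Integrable (Function.uncurry G) (μ.prod μ) := by
    have hbound : Integrable (fun p : ℝ × ℝ => (Cf : ℝ) * |m p.2|) (μ.prod μ) := by
      have h1 : Integrable (fun _ : ℝ => (Cf : ℝ)) μ := integrable_const _
      have h2 : Integrable (fun x => |m x|) μ := hm_int.abs
      exact h1.mul_prod h2
    apply hbound.mono' hGmeas
    have hprodr : μ.prod μ = (volume.prod volume).restrict ((Ioc (0:ℝ) t) ×ˢ (Ioc (0:ℝ) t)) := by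
      rw [hμ, Measure.prod_restrict]
    rw [hprodr]
    refine (ae_restrict_iff' (measurableSet_Ioc.prod measurableSet_Ioc)).2 ?_
    apply Filter.Eventually.of_forall
    rintro ⟨s, x⟩ hp
    obtain ⟨hs, hx⟩ := hp
    simp only [Function.uncurry, hG, Set.indicator_apply, Set.mem_Iic]
    split_ifs with hxs
    · rw [Real.norm_eq_abs, abs_mul, mul_comm]
      apply mul_le_mul_of_nonneg_right _ (abs_nonneg _)
      rw [abs_of_nonneg (le_of_lt (hf_pos _ (by simp; linarith)))]
      apply hCfle
      constructor
      · linarith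
      · have : (0:ℝ) < x := hx.1
        linarith [hs.2]
    · simp [abs_nonneg]
      positivity
  -- Fubini
  have hswap : (∫ s, (∫ x, G s x ∂μ) ∂μ) = ∫ x, (∫ s, G s x ∂μ) ∂μ :=
    MeasureTheory.integral_integral_swap hGint
  -- inner integral in x
  have hinner1 : ∀ s ∈ Ioc (0:ℝ) t, (∫ x, G s x ∂μ) = m s - f s := by
    intro s hs
    have h1 : (∫ x, G s x ∂μ) = ∫ x in Ioc 0 t ∩ Iic s, m x * f (s - x) := by
      rw [hμ, hG]
      exact setIntegral_indicator measurableSet_Iic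
    rw [h1]
    have h2 : Ioc (0:ℝ) t ∩ Iic s = Ioc 0 s := by
      rw [Set.Ioc_inter_Iic, min_eq_right hs.2]
    rw [h2, ← intervalIntegral.integral_of_le (le_of_lt hs.1)]
    have := hm_eq s (le_of_lt hs.1)
    linarith
  -- inner integral in s
  have hinner2 : ∀ x ∈ Ioc (0:ℝ) t, (∫ s, G s x ∂μ) = m x * Fc f (t - x) := by
    intro x hx
    have hGx : ∀ s, G s x = (Ici x).indicator (fun s' => m x * f (s' - x)) s := by
      intro s
      simp only [hG, Set.indicator_apply, Set.mem_Iic, Set.mem_Ici]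
    have h1 : (∫ s, G s x ∂μ) = ∫ s in Ioc 0 t ∩ Ici x, m x * f (s - x) := by
      rw [hμ]
      rw [show (fun s => G s x) = (Ici x).indicator (fun s' => m x * f (s' - x)) from funext hGx]
      exact setIntegral_indicator measurableSet_Ici
    rw [h1]
    have h2 : Ioc (0:ℝ) t ∩ Ici x = Icc x t := by
      ext y
      simp only [Set.mem_inter_iff, Set.mem_Ioc, Set.mem_Ici, Set.mem_Icc]
      constructor
      · rintro ⟨⟨_, hyt⟩, hxy⟩; exact ⟨hxy, hyt⟩
      · rintro ⟨hxy, hyt⟩; exact ⟨⟨lt_of_lt_of_le hx.1 hxy, hyt⟩, hxy⟩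
    rw [h2, integral_Icc_eq_integral_Ioc, ← intervalIntegral.integral_of_le hx.2]
    rw [intervalIntegral.integral_const_mul]
    congr 1
    have h3 := intervalIntegral.integral_comp_sub_right (a := x) (b := t) f x
    rw [h3, sub_self, Fc_eq (by linarith [hx.2])]
  -- put the two inner computations together
  have hL : (∫ s, (∫ x, G s x ∂μ) ∂μ) = (∫ s in Ioc (0:ℝ) t, m s) - ∫ s in Ioc (0:ℝ) t, f s := by
    rw [hμ]
    rw [setIntegral_congr_fun measurableSet_Ioc (fun s hs => hinner1 s hs)]
    exact integral_sub hm_int (hf_int.mono_set (fun x hx => le_of_lt hx.1))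
  have hR : (∫ x, (∫ s, G s x ∂μ) ∂μ) = ∫ x in Ioc (0:ℝ) t, m x * Fc f (t - x) := by
    rw [hμ]
    exact setIntegral_congr_fun measurableSet_Ioc (fun x hx => hinner2 x hx)
  -- integrability of x ↦ m x * Fc f (t - x) on (0, t]
  have hmFc_int : IntegrableOn (fun x => m x * Fc f (t - x)) (Ioc 0 t) := by
    have := mg_intInt hm_loc (⟨le_rfl, ht⟩ : (0:ℝ) ∈ Icc 0 t) (⟨ht, le_rfl⟩ : t ∈ Icc 0 t)
      (Fc_contOn hf_int)
    rwa [intervalIntegrable_iff, uIoc_of_le ht] at this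
  -- final computation
  have hsurv : ∀ x ∈ Ioc (0:ℝ) t, m x * survival f (t - x) = m x - m x * Fc f (t - x) := by
    intro x hx
    have h0 : (0:ℝ) ≤ t - x := by linarith [hx.2]
    rw [surv_eq_one_sub hf_int hf_one h0, ← Fc_eq h0]
    ring
  rw [intervalIntegral.integral_of_le ht]
  rw [setIntegral_congr_fun measurableSet_Ioc hsurv]
  rw [integral_sub hm_int hmFc_int]
  rw [intervalIntegral.integral_of_le ht]
  have hfinal := hswap
  rw [hL, hR] at hfinal
  linarith


private lemma psi_contOn (hf_cont : ContinuousOn f (Set.Ici 0))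
    (hf_int : IntegrableOn f (Set.Ici 0))
    (hf_one : (∫ x in Set.Ici (0 : ℝ), f x) = 1) (S : ℝ) {c : ℝ} (hc : 0 ≤ c) :
    ContinuousOn (fun x => f x - hazardRate f S * survival f x) (Icc 0 c) := by
  apply ((hf_cont.mono (fun x hx => hx.1)).sub
    (((surv_contOn hf_int hf_one).mono (fun x hx => hx.1)).const_smul (hazardRate f S)))

private lemma keyS
    (hf_meas : Measurable f)
    (hf_pos : ∀ x ∈ Set.Ici (0 : ℝ), 0 < f x)
    (hf_cont : ContinuousOn f (Set.Ici 0))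
    (hf_int : IntegrableOn f (Set.Ici 0))
    (hf_one : (∫ x in Set.Ici (0 : ℝ), f x) = 1)
    (hm_loc : LocallyIntegrableOn m (Set.Ici 0))
    (hm_eq : ∀ t ∈ Set.Ici (0 : ℝ), m t = f t + ∫ x in (0 : ℝ)..t, m x * f (t - x))
    {S t : ℝ} (hS : 0 ≤ S) (ht : 0 ≤ t) :
    m t = hazardRate f S + (f t - hazardRate f S * survival f t)
      + ∫ x in (0:ℝ)..t, (f x - hazardRate f S * survival f x) * m (t - x) := by
  set rS := hazardRate f S with hrS
  -- flip lemma 1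
  have hflip1 : (∫ x in (0:ℝ)..t, f x * m (t - x)) = ∫ x in (0:ℝ)..t, m x * f (t - x) := by
    have e1 : (∫ x in (0:ℝ)..t, f x * m (t - x))
        = ∫ x in (0:ℝ)..t, (fun y => m y * f (t - y)) (t - x) := by
      apply intervalIntegral.integral_congr
      intro x _
      have : t - (t - x) = x := by ring
      simp only [this]
      ring
    rw [e1, intervalIntegral.integral_comp_sub_left (fun y => m y * f (t - y)) t]
    simp
  have hflip2 : (∫ x in (0:ℝ)..t, survival f x * m (t - x))
      = ∫ x in (0:ℝ)..t, m x * survival f (t - x) := by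
    have e1 : (∫ x in (0:ℝ)..t, survival f x * m (t - x))
        = ∫ x in (0:ℝ)..t, (fun y => m y * survival f (t - y)) (t - x) := by
      apply intervalIntegral.integral_congr
      intro x _
      have : t - (t - x) = x := by ring
      simp only [this]
      ring
    rw [e1, intervalIntegral.integral_comp_sub_left (fun y => m y * survival f (t - y)) t]
    simp
  -- expand the ψ-integral
  have hint1 : IntervalIntegrable (fun x => f x * m (t - x)) volume 0 t :=
    gm_intInt hm_loc ⟨le_rfl, ht⟩ ⟨ht, le_rfl⟩ (hf_cont.mono (fun x hx => hx.1))
  have hint2 : IntervalIntegrable (fun x => (rS * survival f x) * m (t - x)) volume 0 t := by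
    have h2 := (gm_intInt hm_loc (⟨le_rfl, ht⟩ : (0:ℝ) ∈ Icc 0 t) (⟨ht, le_rfl⟩ : t ∈ Icc 0 t)
      ((surv_contOn hf_int hf_one).mono (fun x hx => hx.1))).const_mul rS
    have h3 : (fun x : ℝ => rS * survival f x * m (t - x))
        = (fun x : ℝ => rS * (survival f x * m (t - x))) := by funext x; ring
    rw [h3]
    exact h2
  have hsplit : (∫ x in (0:ℝ)..t, (f x - rS * survival f x) * m (t - x))
      = (∫ x in (0:ℝ)..t, f x * m (t - x)) - ∫ x in (0:ℝ)..t, (rS * survival f x) * m (t - x) := by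
    rw [← intervalIntegral.integral_sub hint1 hint2]
    apply intervalIntegral.integral_congr
    intro x _
    ring
  have hconst : (∫ x in (0:ℝ)..t, (rS * survival f x) * m (t - x))
      = rS * ∫ x in (0:ℝ)..t, m x * survival f (t - x) := by
    rw [← hflip2, ← intervalIntegral.integral_const_mul]
    apply intervalIntegral.integral_congr
    intro x _
    ring
  have hIdv := renewal_Id hf_meas hf_pos hf_cont hf_int hf_one hm_loc hm_eq ht
  have hme := hm_eq t (mem_Ici.mpr ht)
  have hFb : survival f t = 1 - ∫ x in (0:ℝ)..t, f x := surv_eq_one_sub hf_int hf_one ht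
  have hprod : rS * survival f t = rS - rS * ∫ x in (0:ℝ)..t, f x := by
    rw [hFb]; ring
  rw [hsplit, hflip1, hconst, hIdv]
  linarith

/-- The diamond inequality: for `t₃ ≤ a < S` with small gap,
`m S - m a ≤ ∫₀ᵃ ψ_S x (m (S-x) - m (a-x)) dx`. -/
private lemma diamond
    (hf_meas : Measurable f)
    (hf_pos : ∀ x ∈ Set.Ici (0 : ℝ), 0 < f x)
    (hf_cont : ContinuousOn f (Set.Ici 0))
    (hf_int : IntegrableOn f (Set.Ici 0))
    (hf_one : (∫ x in Set.Ici (0 : ℝ), f x) = 1)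
    (hm_loc : LocallyIntegrableOn m (Set.Ici 0))
    (hm_eq : ∀ t ∈ Set.Ici (0 : ℝ), m t = f t + ∫ x in (0 : ℝ)..t, m x * f (t - x))
    (hm_diff : ∀ x : ℝ, 0 < x → DifferentiableAt ℝ m x)
    {t₃ : ℝ} (ht₃pos : 0 < t₃)
    (hr_ge' : ∀ t : ℝ, t₃ < t → ∀ x : ℝ, 0 < x → x < t →
      hazardRate f t ≤ hazardRate f (t - x))
    {a S h₀ : ℝ} (hm_small : (∫ x in (0:ℝ)..h₀, m x) ≤ 1)
    (ha : t₃ ≤ a) (haS : a < S) (hgap : S - a ≤ h₀) :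
    m S - m a ≤ ∫ x in (0:ℝ)..a,
      (f x - hazardRate f S * survival f x) * (m (S - x) - m (a - x)) := by
  set rS := hazardRate f S with hrS
  set ψ : ℝ → ℝ := fun x => f x - rS * survival f x with hψ
  have h0a : (0:ℝ) ≤ a := le_trans (le_of_lt ht₃pos) ha
  have h0S : (0:ℝ) ≤ S := le_trans h0a (le_of_lt haS)
  have ht₃S : t₃ < S := lt_of_le_of_lt ha haS
  -- weak hazard monotonicity helper
  have hr_le : ∀ {u v : ℝ}, t₃ ≤ u → u ≤ v → hazardRate f v ≤ hazardRate f u := by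
    intro u v hu huv
    rcases eq_or_lt_of_le huv with h | h
    · rw [h]
    · have h2 := hr_ge' v (lt_of_le_of_lt hu h) (v - u) (by linarith)
        (by have : 0 < u := lt_of_lt_of_le ht₃pos hu; linarith)
      have h3 : v - (v - u) = u := by ring
      rwa [h3] at h2
  -- ψ continuity
  have hψcont : ∀ {c : ℝ}, 0 ≤ c → ContinuousOn ψ (Icc 0 c) := by
    intro c hc
    exact psi_contOn hf_cont hf_int hf_one S hc
  -- KeyS at S and a
  have hKS := keyS hf_meas hf_pos hf_cont hf_int hf_one hm_loc hm_eq h0S h0S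
  have hKa := keyS hf_meas hf_pos hf_cont hf_int hf_one hm_loc hm_eq h0S h0a
  -- integrabilities
  have hintS1 : IntervalIntegrable (fun x => ψ x * m (S - x)) volume 0 a :=
    gm_intInt hm_loc ⟨le_rfl, h0S⟩ ⟨h0a, le_of_lt haS⟩ (hψcont h0S)
  have hintS2 : IntervalIntegrable (fun x => ψ x * m (S - x)) volume a S :=
    gm_intInt hm_loc ⟨h0a, le_of_lt haS⟩ ⟨h0S, le_rfl⟩ (hψcont h0S)
  have hinta : IntervalIntegrable (fun x => ψ x * m (a - x)) volume 0 a :=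
    gm_intInt hm_loc ⟨le_rfl, h0a⟩ ⟨h0a, le_rfl⟩ (hψcont h0a)
  -- split the S-integral
  have hsplitS : (∫ x in (0:ℝ)..S, ψ x * m (S - x))
      = (∫ x in (0:ℝ)..a, ψ x * m (S - x)) + ∫ x in a..S, ψ x * m (S - x) :=
    (intervalIntegral.integral_add_adjacent_intervals hintS1 hintS2).symm
  -- difference of the two a-integrals
  have hdiff : (∫ x in (0:ℝ)..a, ψ x * m (S - x)) - (∫ x in (0:ℝ)..a, ψ x * m (a - x))
      = ∫ x in (0:ℝ)..a, ψ x * (m (S - x) - m (a - x)) := by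
    rw [← intervalIntegral.integral_sub hintS1 hinta]
    apply intervalIntegral.integral_congr
    intro x _
    ring
  -- ψ S = 0
  have hψS : ψ S = 0 := by
    have := haz_mul hf_pos hf_int h0S
    simp only [hψ, hrS]
    linarith
  -- ψ a = (r a - r S) * survival f a  (call it B)
  set B := (hazardRate f a - rS) * survival f a with hB
  have hψa : ψ a = B := by
    have hfa := haz_mul hf_pos hf_int h0a
    simp only [hψ, hB]
    rw [sub_mul, hfa]
  have hBnn : 0 ≤ B := by
    apply mul_nonneg
    · have h2 := hr_le ha (le_of_lt haS)
      simp only [hrS]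
      linarith
    · exact le_of_lt (surv_pos hf_pos hf_int h0a)
  -- bound the tail integral
  have htail : (∫ x in a..S, ψ x * m (S - x)) ≤ B := by
    have hmono : (∫ x in a..S, ψ x * m (S - x)) ≤ ∫ x in a..S, B * m (S - x) := by
      apply intervalIntegral.integral_mono_on (le_of_lt haS) hintS2
      · exact (m_refl_intInt hm_loc (⟨h0a, le_of_lt haS⟩ : a ∈ Icc 0 S)
          (⟨h0S, le_rfl⟩ : S ∈ Icc 0 S)).const_mul B
      · intro x hx
        have h0x : (0:ℝ) ≤ x := le_trans h0a hx.1
        have hxS : x ≤ S := hx.2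
        have hmnn : 0 ≤ m (S - x) :=
          le_of_lt (m_pos hf_pos hf_cont hm_loc hm_eq hm_diff (by linarith))
        apply mul_le_mul_of_nonneg_right _ hmnn
        -- ψ x ≤ B
        have hfx := haz_mul hf_pos hf_int h0x
        have hψx : ψ x = (hazardRate f x - rS) * survival f x := by
          simp only [hψ]
          rw [sub_mul, hfx]
        rw [hψx, hB]
        have h1 : hazardRate f x ≤ hazardRate f a := hr_le ha hx.1
        have h2 : rS ≤ hazardRate f x := hr_le (le_trans ha hx.1) hx.2
        have h3 : survival f x ≤ survival f a := surv_antitone hf_pos hf_int hf_one h0a hx.1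
        have h4 : 0 ≤ survival f x := le_of_lt (surv_pos hf_pos hf_int (le_trans h0a hx.1))
        apply mul_le_mul (by linarith) h3 h4 (by linarith)
    have hcomp : (∫ x in a..S, B * m (S - x)) = B * ∫ y in (0:ℝ)..(S - a), m y := by
      rw [intervalIntegral.integral_const_mul]
      congr 1
      have := intervalIntegral.integral_comp_sub_left m S (a := a) (b := S)
      rw [this]
      simp
    have hm1 : (∫ y in (0:ℝ)..(S - a), m y) ≤ 1 := by
      have hadd : (∫ y in (0:ℝ)..(S-a), m y) + (∫ y in (S-a)..h₀, m y) = ∫ y in (0:ℝ)..h₀, m y :=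
        intervalIntegral.integral_add_adjacent_intervals
          (m_intInt hm_loc le_rfl (by linarith))
          (m_intInt hm_loc (by linarith) (by linarith))
      have hnn : 0 ≤ ∫ y in (S-a)..h₀, m y := by
        apply intervalIntegral.integral_nonneg hgap
        intro u hu
        exact le_of_lt (m_pos hf_pos hf_cont hm_loc hm_eq hm_diff (le_trans (by linarith) hu.1))
      linarith
    calc (∫ x in a..S, ψ x * m (S - x)) ≤ ∫ x in a..S, B * m (S - x) := hmono
      _ = B * ∫ y in (0:ℝ)..(S - a), m y := hcomp
      _ ≤ B * 1 := mul_le_mul_of_nonneg_left hm1 hBnn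
      _ = B := mul_one B
  -- assemble
  have hKdiff : m S - m a = (ψ S - ψ a)
      + ((∫ x in (0:ℝ)..a, ψ x * (m (S - x) - m (a - x))) + ∫ x in a..S, ψ x * m (S - x)) := by
    rw [← hdiff]
    have e1 : m S = rS + ψ S + ∫ x in (0:ℝ)..S, ψ x * m (S - x) := hKS
    have e2 : m a = rS + ψ a + ∫ x in (0:ℝ)..a, ψ x * m (a - x) := hKa
    rw [hsplitS] at e1
    linarith
  rw [hKdiff, hψS, hψa]
  linarith


/-- integral over an interval of a function nonpositive on the interior is nonpositive. -/
private lemma int_nonpos {g : ℝ → ℝ} {a b : ℝ} (hab : a ≤ b)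
    (h : ∀ x, a < x → x < b → g x ≤ 0) : (∫ x in a..b, g x) ≤ 0 := by
  rw [intervalIntegral.integral_of_le hab, integral_Ioc_eq_integral_Ioo]
  have h2 : (0:ℝ) ≤ ∫ x in Ioo a b, -g x := setIntegral_nonneg measurableSet_Ioo
    (fun x hx => neg_nonneg.2 (h x hx.1 hx.2))
  rw [integral_neg] at h2
  linarith

/-- interval-integral monotonicity from interior pointwise bounds. -/
private lemma int_mono_Ioo {g h : ℝ → ℝ} {a b : ℝ} (hab : a ≤ b)
    (hg : IntervalIntegrable g volume a b) (hh : IntervalIntegrable h volume a b)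
    (hle : ∀ x, a < x → x < b → g x ≤ h x) :
    (∫ x in a..b, g x) ≤ ∫ x in a..b, h x := by
  have h1 : (∫ x in a..b, (g x - h x)) ≤ 0 :=
    int_nonpos hab (fun x hx1 hx2 => sub_nonpos.2 (hle x hx1 hx2))
  rw [intervalIntegral.integral_sub hg hh] at h1
  linarith

private lemma mul_bound {p q C r : ℝ} (hp0 : 0 ≤ p) (hpC : p ≤ C) (hqr : q ≤ r) (hr0 : 0 ≤ r) :
    p * q ≤ C * r := by
  rcases le_or_gt q 0 with h | h
  · calc p * q ≤ 0 := mul_nonpos_of_nonneg_of_nonpos hp0 h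
    _ ≤ C * r := mul_nonneg (le_trans hp0 hpC) hr0
  · calc p * q ≤ C * q := mul_le_mul_of_nonneg_right hpC (le_of_lt h)
    _ ≤ C * r := mul_le_mul_of_nonneg_left hqr (le_trans hp0 hpC)

private lemma m_strictAnti_Ioc (hm_diff : ∀ x : ℝ, 0 < x → DifferentiableAt ℝ m x)
    (hm'_neg : ∀ x ∈ Set.Ioo 0 t₃, deriv m x < 0) :
    StrictAntiOn m (Ioc 0 t₃) := by
  apply strictAntiOn_of_deriv_neg (convex_Ioc 0 t₃)
    ((m_contOn hm_diff).mono (fun x hx => hx.1))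
  intro x hx
  rw [interior_Ioc] at hx
  exact hm'_neg x hx

private lemma m_anti_Ioc_weak (hm_diff : ∀ x : ℝ, 0 < x → DifferentiableAt ℝ m x)
    (hm'_neg : ∀ x ∈ Set.Ioo 0 t₃, deriv m x < 0)
    {u v : ℝ} (hu : u ∈ Ioc 0 t₃) (hv : v ∈ Ioc 0 t₃) (huv : u ≤ v) : m v ≤ m u := by
  rcases eq_or_lt_of_le huv with h | h
  · rw [h]
  · exact le_of_lt (m_strictAnti_Ioc hm_diff hm'_neg hu hv h)

private lemma exists_h0 (hm_loc : LocallyIntegrableOn m (Set.Ici 0)) (ht₃pos : 0 < t₃) :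
    ∃ h₀ : ℝ, 0 < h₀ ∧ h₀ < t₃ ∧ (∫ x in (0:ℝ)..h₀, m x) ≤ 1 := by
  set P : ℝ → ℝ := fun s => ∫ x in Ioc (0:ℝ) s, m x with hP
  have hmint : IntegrableOn m (Icc 0 t₃) :=
    hm_loc.integrableOn_compact_subset Icc_subset_Ici_self isCompact_Icc
  have hPcont : ContinuousOn P (Icc 0 t₃) := intervalIntegral.continuousOn_primitive hmint
  have hcw : ContinuousWithinAt P (Icc 0 t₃) 0 := hPcont 0 ⟨le_rfl, le_of_lt ht₃pos⟩
  rw [Metric.continuousWithinAt_iff] at hcw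
  obtain ⟨δ₀, hδ₀, hδprop⟩ := hcw 1 one_pos
  set h₀ := min (δ₀ / 2) (t₃ / 2) with hh₀
  have hh₀pos : 0 < h₀ := lt_min (by linarith) (by linarith)
  have hh₀t₃ : h₀ < t₃ := lt_of_le_of_lt (min_le_right _ _) (by linarith)
  refine ⟨h₀, hh₀pos, hh₀t₃, ?_⟩
  have h1 := hδprop (⟨le_of_lt hh₀pos, le_of_lt hh₀t₃⟩ : h₀ ∈ Icc (0:ℝ) t₃)
    (by rw [Real.dist_eq, sub_zero, abs_of_nonneg (le_of_lt hh₀pos)]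
        exact lt_of_le_of_lt (min_le_left _ _) (by linarith))
  have hP0 : P 0 = 0 := by simp [hP]
  rw [hP0, Real.dist_eq, sub_zero] at h1
  rw [intervalIntegral.integral_of_le (le_of_lt hh₀pos)]
  calc (∫ x in Ioc (0:ℝ) h₀, m x) ≤ |P h₀| := le_abs_self _
  _ ≤ 1 := le_of_lt h1

private lemma psi_nonneg (hf_pos : ∀ x ∈ Set.Ici (0 : ℝ), 0 < f x)
    (hf_int : IntegrableOn f (Set.Ici 0))
    (hr_ge' : ∀ t : ℝ, t₃ < t → ∀ x : ℝ, 0 < x → x < t →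
      hazardRate f t ≤ hazardRate f (t - x))
    {b x : ℝ} (hb : t₃ < b) (hx : 0 < x) (hxb : x < b) :
    0 ≤ f x - hazardRate f b * survival f x := by
  have h := hr_ge' b hb (b - x) (by linarith) (by linarith)
  rw [show b - (b - x) = x by ring] at h
  have hfx := haz_mul hf_pos hf_int (le_of_lt hx)
  have hFb := surv_pos hf_pos hf_int (le_of_lt hx)
  nlinarith [mul_nonneg (sub_nonneg.2 h) hFb.le]

private lemma psi_le_f (hf_pos : ∀ x ∈ Set.Ici (0 : ℝ), 0 < f x)
    (hf_int : IntegrableOn f (Set.Ici 0)) {b x : ℝ} (hb : 0 ≤ b) (hx : 0 ≤ x) :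
    f x - hazardRate f b * survival f x ≤ f x := by
  have h1 := haz_pos hf_pos hf_int hb
  have h2 := surv_pos hf_pos hf_int hx
  nlinarith

private lemma V_zero
    (hf_meas : Measurable f)
    (hf_pos : ∀ x ∈ Set.Ici (0 : ℝ), 0 < f x)
    (hf_cont : ContinuousOn f (Set.Ici 0))
    (hf_int : IntegrableOn f (Set.Ici 0))
    (hf_one : (∫ x in Set.Ici (0 : ℝ), f x) = 1)
    (hm_loc : LocallyIntegrableOn m (Set.Ici 0))
    (hm_eq : ∀ t ∈ Set.Ici (0 : ℝ), m t = f t + ∫ x in (0 : ℝ)..t, m x * f (t - x))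
    (hm_diff : ∀ x : ℝ, 0 < x → DifferentiableAt ℝ m x)
    (hm'_neg : ∀ x ∈ Set.Ioo 0 t₃, deriv m x < 0)
    (ht₃pos : 0 < t₃)
    (hr_ge' : ∀ t : ℝ, t₃ < t → ∀ x : ℝ, 0 < x → x < t →
      hazardRate f t ≤ hazardRate f (t - x))
    {h₀ : ℝ} (hh₀ : 0 < h₀) (hh₀t₃ : h₀ < t₃) (hm_small : (∫ x in (0:ℝ)..h₀, m x) ≤ 1) :
    ∀ b ∈ Icc t₃ (t₃ + h₀), m b ≤ m t₃ := by
  -- the clamped excess function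
  set Vc : ℝ → ℝ := fun s => max (m (max s t₃) - m t₃) 0 with hVc
  have hVc_cont : Continuous Vc := by
    have h1 : Continuous fun s : ℝ => m (max s t₃) := by
      apply (m_contOn hm_diff).comp_continuous (continuous_id.max continuous_const)
      intro s
      exact lt_of_lt_of_le ht₃pos (le_max_right _ _)
    exact (h1.sub continuous_const).max continuous_const
  have hVc_nonneg : ∀ s, 0 ≤ Vc s := fun s => le_max_right _ _
  have hVc_eq : ∀ {s}, t₃ ≤ s → Vc s = max (m s - m t₃) 0 := by
    intro s hs
    simp only [hVc, max_eq_left hs]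
  -- bound for f (hence ψ) on [0, t₃ + h₀]
  obtain ⟨xM, hxM, hmax⟩ := isCompact_Icc.exists_isMaxOn
    (⟨0, le_rfl, by linarith⟩ : (Icc (0:ℝ) (t₃ + h₀)).Nonempty)
    (hf_cont.mono (fun x hx => hx.1))
  set C := f xM with hC
  have hCnn : 0 ≤ C := le_of_lt (hf_pos xM hxM.1)
  have hCle : ∀ y ∈ Icc (0:ℝ) (t₃ + h₀), f y ≤ C := fun y hy => hmax hy
  -- Grönwall hypothesis
  have hrec : ∀ b ∈ Icc t₃ (t₃ + h₀), Vc b ≤ C * ∫ y in t₃..b, Vc y := by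
    intro b hb
    rcases eq_or_lt_of_le hb.1 with hbt | hbt
    · rw [← hbt]
      simp [hVc_eq (le_refl t₃)]
    -- b > t₃
    have h0b : (0:ℝ) < b := lt_trans ht₃pos hbt
    have hdia := diamond hf_meas hf_pos hf_cont hf_int hf_one hm_loc hm_eq hm_diff
      ht₃pos hr_ge' hm_small (le_refl t₃) hbt (by linarith [hb.2])
    set ψ : ℝ → ℝ := fun x => f x - hazardRate f b * survival f x with hψ
    -- integrabilities
    have hψcont : ∀ {c : ℝ}, 0 ≤ c → ContinuousOn ψ (Icc 0 c) :=
      fun hc => psi_contOn hf_cont hf_int hf_one b hc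
    have hpair_int : ∀ {u v : ℝ}, u ∈ Icc (0:ℝ) t₃ → v ∈ Icc (0:ℝ) t₃ →
        IntervalIntegrable (fun x => ψ x * (m (b - x) - m (t₃ - x))) volume u v := by
      intro u v hu hv
      have heq : (fun x => ψ x * (m (b - x) - m (t₃ - x)))
          = fun x => ψ x * m (b - x) - ψ x * m (t₃ - x) := by
        funext x; ring
      rw [heq]
      have hu' : u ∈ Icc (0:ℝ) b := ⟨hu.1, le_trans hu.2 (le_of_lt hbt)⟩
      have hv' : v ∈ Icc (0:ℝ) b := ⟨hv.1, le_trans hv.2 (le_of_lt hbt)⟩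
      exact (gm_intInt hm_loc hu' hv' (hψcont (le_of_lt h0b))).sub
        (gm_intInt hm_loc hu hv (hψcont (le_of_lt ht₃pos)))
    -- split the integral at b - t₃
    have hbt3 : 0 ≤ b - t₃ := by linarith
    have hbt3' : b - t₃ ≤ t₃ := by linarith [hb.2]
    have hsplit : (∫ x in (0:ℝ)..t₃, ψ x * (m (b - x) - m (t₃ - x)))
        = (∫ x in (0:ℝ)..(b - t₃), ψ x * (m (b - x) - m (t₃ - x)))
          + ∫ x in (b - t₃)..t₃, ψ x * (m (b - x) - m (t₃ - x)) :=
      (intervalIntegral.integral_add_adjacent_intervals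
        (hpair_int ⟨le_rfl, le_of_lt ht₃pos⟩ ⟨hbt3, hbt3'⟩)
        (hpair_int ⟨hbt3, hbt3'⟩ ⟨le_of_lt ht₃pos, le_rfl⟩)).symm
    -- first piece: bounded by C * Vc (b - x)
    have hpiece1 : (∫ x in (0:ℝ)..(b - t₃), ψ x * (m (b - x) - m (t₃ - x)))
        ≤ ∫ x in (0:ℝ)..(b - t₃), C * Vc (b - x) := by
      apply int_mono_Ioo hbt3 (hpair_int ⟨le_rfl, le_of_lt ht₃pos⟩ ⟨hbt3, hbt3'⟩)
      · exact ((hVc_cont.comp (continuous_const.sub continuous_id)).intervalIntegrable _ _).const_mul C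
      · intro x hx1 hx2
        have hψ0 : 0 ≤ ψ x := psi_nonneg hf_pos hf_int hr_ge' hbt hx1 (by linarith)
        have hψC : ψ x ≤ C := le_trans (psi_le_f hf_pos hf_int (le_of_lt h0b) (le_of_lt hx1))
          (hCle x ⟨le_of_lt hx1, by linarith⟩)
        apply mul_bound hψ0 hψC _ (hVc_nonneg _)
        -- pair ≤ Vc (b - x)
        have h1 : m t₃ - m (t₃ - x) ≤ 0 := by
          have := m_anti_Ioc_weak hm_diff hm'_neg
            (⟨by linarith, by linarith⟩ : t₃ - x ∈ Ioc 0 t₃)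
            (⟨ht₃pos, le_rfl⟩ : t₃ ∈ Ioc 0 t₃) (by linarith)
          linarith
        have h2 : m (b - x) - m t₃ ≤ Vc (b - x) := by
          rw [hVc_eq (by linarith : t₃ ≤ b - x)]
          exact le_max_left _ _
        linarith
    -- transform the first piece's majorant
    have htrans : (∫ x in (0:ℝ)..(b - t₃), C * Vc (b - x)) = C * ∫ y in t₃..b, Vc y := by
      rw [intervalIntegral.integral_const_mul]
      congr 1
      have h3 := intervalIntegral.integral_comp_sub_left Vc b (a := 0) (b := b - t₃)
      rw [show b - (b - t₃) = t₃ by ring, sub_zero] at h3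
      exact h3
    -- second piece nonpositive
    have hpiece2 : (∫ x in (b - t₃)..t₃, ψ x * (m (b - x) - m (t₃ - x))) ≤ 0 := by
      apply int_nonpos hbt3'
      intro x hx1 hx2
      have hx0 : 0 < x := lt_of_le_of_lt hbt3 hx1
      have hψ0 : 0 ≤ ψ x := psi_nonneg hf_pos hf_int hr_ge' hbt hx0 (by linarith)
      have hpair : m (b - x) - m (t₃ - x) ≤ 0 := by
        have := m_anti_Ioc_weak hm_diff hm'_neg
          (⟨by linarith, by linarith⟩ : t₃ - x ∈ Ioc 0 t₃)
          (⟨by linarith, by linarith⟩ : b - x ∈ Ioc 0 t₃) (by linarith)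
        linarith
      exact mul_nonpos_of_nonneg_of_nonpos hψ0 hpair
    -- integral of Vc is nonneg
    have hVint : 0 ≤ ∫ y in t₃..b, Vc y :=
      intervalIntegral.integral_nonneg (le_of_lt hbt) (fun u _ => hVc_nonneg u)
    -- assemble
    have hfinal : m b - m t₃ ≤ C * ∫ y in t₃..b, Vc y := by
      calc m b - m t₃ ≤ ∫ x in (0:ℝ)..t₃, ψ x * (m (b - x) - m (t₃ - x)) := hdia
      _ = (∫ x in (0:ℝ)..(b - t₃), ψ x * (m (b - x) - m (t₃ - x)))
          + ∫ x in (b - t₃)..t₃, ψ x * (m (b - x) - m (t₃ - x)) := hsplit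
      _ ≤ (∫ x in (0:ℝ)..(b - t₃), C * Vc (b - x)) + 0 := add_le_add hpiece1 hpiece2
      _ = C * ∫ y in t₃..b, Vc y := by rw [add_zero, htrans]
    rw [hVc_eq hb.1]
    apply max_le hfinal (mul_nonneg hCnn hVint)
  -- apply Grönwall
  have hzero := my_gronwall hCnn hVc_cont hVc_nonneg hrec
  intro b hb
  have := hzero b hb
  rw [hVc_eq hb.1] at this
  have h2 : m b - m t₃ ≤ max (m b - m t₃) 0 := le_max_left _ _
  rw [this] at h2
  linarith

private lemma E_zero
    (hf_meas : Measurable f)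
    (hf_pos : ∀ x ∈ Set.Ici (0 : ℝ), 0 < f x)
    (hf_cont : ContinuousOn f (Set.Ici 0))
    (hf_int : IntegrableOn f (Set.Ici 0))
    (hf_one : (∫ x in Set.Ici (0 : ℝ), f x) = 1)
    (hm_loc : LocallyIntegrableOn m (Set.Ici 0))
    (hm_eq : ∀ t ∈ Set.Ici (0 : ℝ), m t = f t + ∫ x in (0 : ℝ)..t, m x * f (t - x))
    (hm_diff : ∀ x : ℝ, 0 < x → DifferentiableAt ℝ m x)
    (hm'_neg : ∀ x ∈ Set.Ioo 0 t₃, deriv m x < 0)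
    (ht₃pos : 0 < t₃)
    (hr_ge' : ∀ t : ℝ, t₃ < t → ∀ x : ℝ, 0 < x → x < t →
      hazardRate f t ≤ hazardRate f (t - x))
    {h₀ : ℝ} (hh₀ : 0 < h₀) (hh₀t₃ : h₀ < t₃) (hm_small : (∫ x in (0:ℝ)..h₀, m x) ≤ 1)
    {h B : ℝ} (hh : 0 < h) (hhh₀ : h ≤ h₀) (hB : t₃ + h ≤ B) :
    ∀ b ∈ Icc (t₃ + h) B, m b ≤ m (b - h) := by
  have hV := V_zero hf_meas hf_pos hf_cont hf_int hf_one hm_loc hm_eq hm_diff hm'_neg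
    ht₃pos hr_ge' hh₀ hh₀t₃ hm_small
  -- clamped difference function
  set Ec : ℝ → ℝ := fun s => max (m (max s (t₃ + h)) - m (max s (t₃ + h) - h)) 0 with hEc
  have hclamp_pos : ∀ s : ℝ, 0 < max s (t₃ + h) := fun s =>
    lt_of_lt_of_le (by linarith) (le_max_right _ _)
  have hEc_cont : Continuous Ec := by
    have h1 : Continuous fun s : ℝ => m (max s (t₃ + h)) := by
      apply (m_contOn hm_diff).comp_continuous (continuous_id.max continuous_const)
      exact hclamp_pos
    have h2 : Continuous fun s : ℝ => m (max s (t₃ + h) - h) := by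
      apply (m_contOn hm_diff).comp_continuous
        ((continuous_id.max continuous_const).sub continuous_const)
      intro s
      have := le_max_right s (t₃ + h)
      show (0:ℝ) < max s (t₃ + h) - h
      linarith [le_max_right s (t₃ + h)]
    exact (h1.sub h2).max continuous_const
  have hEc_nonneg : ∀ s, 0 ≤ Ec s := fun s => le_max_right _ _
  have hEc_eq : ∀ {s}, t₃ + h ≤ s → Ec s = max (m s - m (s - h)) 0 := by
    intro s hs
    simp only [hEc, max_eq_left hs]
  -- bound for f (hence ψ) on [0, B]
  obtain ⟨xM, hxM, hmax⟩ := isCompact_Icc.exists_isMaxOn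
    (⟨0, le_rfl, by linarith⟩ : (Icc (0:ℝ) B).Nonempty)
    (hf_cont.mono (fun x hx => hx.1))
  set C := f xM with hC
  have hCnn : 0 ≤ C := le_of_lt (hf_pos xM hxM.1)
  have hCle : ∀ y ∈ Icc (0:ℝ) B, f y ≤ C := fun y hy => hmax hy
  -- Grönwall hypothesis
  have hrec : ∀ b ∈ Icc (t₃ + h) B, Ec b ≤ C * ∫ y in (t₃ + h)..b, Ec y := by
    intro b hb
    have hbt : t₃ < b := by linarith [hb.1]
    have h0b : (0:ℝ) < b := lt_trans ht₃pos hbt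
    have hbh : t₃ ≤ b - h := by linarith [hb.1]
    have hdia := diamond hf_meas hf_pos hf_cont hf_int hf_one hm_loc hm_eq hm_diff
      ht₃pos hr_ge' hm_small hbh (by linarith : b - h < b) (by linarith)
    set ψ : ℝ → ℝ := fun x => f x - hazardRate f b * survival f x with hψ
    have hψcont : ∀ {c : ℝ}, 0 ≤ c → ContinuousOn ψ (Icc 0 c) :=
      fun hc => psi_contOn hf_cont hf_int hf_one b hc
    have hpair_int : ∀ {u v : ℝ}, u ∈ Icc (0:ℝ) (b - h) → v ∈ Icc (0:ℝ) (b - h) →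
        IntervalIntegrable (fun x => ψ x * (m (b - x) - m (b - h - x))) volume u v := by
      intro u v hu hv
      have heq : (fun x => ψ x * (m (b - x) - m (b - h - x)))
          = fun x => ψ x * m (b - x) - ψ x * m (b - h - x) := by
        funext x; ring
      rw [heq]
      have hu' : u ∈ Icc (0:ℝ) b := ⟨hu.1, by linarith [hu.2]⟩
      have hv' : v ∈ Icc (0:ℝ) b := ⟨hv.1, by linarith [hv.2]⟩
      exact (gm_intInt hm_loc hu' hv' (hψcont (le_of_lt h0b))).sub
        (gm_intInt hm_loc hu hv (hψcont (by linarith : (0:ℝ) ≤ b - h)))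
    -- splitting points
    have hp1 : (0:ℝ) ≤ b - t₃ - h := by linarith [hb.1]
    have hp2 : b - t₃ - h ≤ b - t₃ := by linarith
    have hp3 : b - t₃ ≤ b - h := by linarith
    have hmem1 : (0:ℝ) ∈ Icc (0:ℝ) (b - h) := ⟨le_rfl, by linarith⟩
    have hmem2 : b - t₃ - h ∈ Icc (0:ℝ) (b - h) := ⟨hp1, by linarith⟩
    have hmem3 : b - t₃ ∈ Icc (0:ℝ) (b - h) := ⟨by linarith, hp3⟩
    have hmem4 : b - h ∈ Icc (0:ℝ) (b - h) := ⟨by linarith, le_rfl⟩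
    have hsplit : (∫ x in (0:ℝ)..(b - h), ψ x * (m (b - x) - m (b - h - x)))
        = (∫ x in (0:ℝ)..(b - t₃ - h), ψ x * (m (b - x) - m (b - h - x)))
          + ((∫ x in (b - t₃ - h)..(b - t₃), ψ x * (m (b - x) - m (b - h - x)))
            + ∫ x in (b - t₃)..(b - h), ψ x * (m (b - x) - m (b - h - x))) := by
      rw [intervalIntegral.integral_add_adjacent_intervals
        (hpair_int hmem2 hmem3) (hpair_int hmem3 hmem4),
        intervalIntegral.integral_add_adjacent_intervals
        (hpair_int hmem1 hmem2) (hpair_int hmem2 hmem4)]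
    -- piece 1
    have hpiece1 : (∫ x in (0:ℝ)..(b - t₃ - h), ψ x * (m (b - x) - m (b - h - x)))
        ≤ ∫ x in (0:ℝ)..(b - t₃ - h), C * Ec (b - x) := by
      apply int_mono_Ioo hp1 (hpair_int hmem1 hmem2)
      · exact ((hEc_cont.comp (continuous_const.sub continuous_id)).intervalIntegrable _ _).const_mul C
      · intro x hx1 hx2
        have hψ0 : 0 ≤ ψ x := psi_nonneg hf_pos hf_int hr_ge' hbt hx1 (by linarith)
        have hψC : ψ x ≤ C := le_trans (psi_le_f hf_pos hf_int (le_of_lt h0b) (le_of_lt hx1))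
          (hCle x ⟨le_of_lt hx1, by linarith [hb.2]⟩)
        apply mul_bound hψ0 hψC _ (hEc_nonneg _)
        have hbx : t₃ + h ≤ b - x := by linarith
        rw [hEc_eq hbx]
        have : m (b - x) - m (b - x - h) ≤ max (m (b - x) - m (b - x - h)) 0 := le_max_left _ _
        calc m (b - x) - m (b - h - x) = m (b - x) - m (b - x - h) := by ring_nf
        _ ≤ max (m (b - x) - m (b - x - h)) 0 := le_max_left _ _
    have htrans : (∫ x in (0:ℝ)..(b - t₃ - h), C * Ec (b - x))
        = C * ∫ y in (t₃ + h)..b, Ec y := by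
      rw [intervalIntegral.integral_const_mul]
      congr 1
      have h3 := intervalIntegral.integral_comp_sub_left Ec b (a := 0) (b := b - t₃ - h)
      rw [show b - (b - t₃ - h) = t₃ + h by ring, sub_zero] at h3
      exact h3
    -- piece 2 (straddling)
    have hpiece2 : (∫ x in (b - t₃ - h)..(b - t₃), ψ x * (m (b - x) - m (b - h - x))) ≤ 0 := by
      apply int_nonpos hp2
      intro x hx1 hx2
      have hx0 : 0 < x := lt_of_le_of_lt hp1 hx1
      have hψ0 : 0 ≤ ψ x := psi_nonneg hf_pos hf_int hr_ge' hbt hx0 (by linarith)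
      have hpair : m (b - x) - m (b - h - x) ≤ 0 := by
        have hVb : m (b - x) ≤ m t₃ := hV (b - x) ⟨by linarith, by linarith⟩
        have h2 : m t₃ ≤ m (b - h - x) := m_anti_Ioc_weak hm_diff hm'_neg
          (⟨by linarith, by linarith⟩ : b - h - x ∈ Ioc 0 t₃)
          (⟨ht₃pos, le_rfl⟩ : t₃ ∈ Ioc 0 t₃) (by linarith)
        linarith
      exact mul_nonpos_of_nonneg_of_nonpos hψ0 hpair
    -- piece 3 (both below t₃)
    have hpiece3 : (∫ x in (b - t₃)..(b - h), ψ x * (m (b - x) - m (b - h - x))) ≤ 0 := by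
      apply int_nonpos hp3
      intro x hx1 hx2
      have hx0 : 0 < x := by linarith [hp1]
      have hψ0 : 0 ≤ ψ x := psi_nonneg hf_pos hf_int hr_ge' hbt hx0 (by linarith)
      have hpair : m (b - x) - m (b - h - x) ≤ 0 := by
        have := m_anti_Ioc_weak hm_diff hm'_neg
          (⟨by linarith, by linarith⟩ : b - h - x ∈ Ioc 0 t₃)
          (⟨by linarith, by linarith⟩ : b - x ∈ Ioc 0 t₃) (by linarith)
        linarith
      exact mul_nonpos_of_nonneg_of_nonpos hψ0 hpair
    have hEint : 0 ≤ ∫ y in (t₃ + h)..b, Ec y :=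
      intervalIntegral.integral_nonneg hb.1 (fun u _ => hEc_nonneg u)
    have hfinal : m b - m (b - h) ≤ C * ∫ y in (t₃ + h)..b, Ec y := by
      calc m b - m (b - h)
          ≤ ∫ x in (0:ℝ)..(b - h), ψ x * (m (b - x) - m (b - h - x)) := hdia
      _ = _ := hsplit
      _ ≤ (∫ x in (0:ℝ)..(b - t₃ - h), C * Ec (b - x)) + (0 + 0) :=
          add_le_add hpiece1 (add_le_add hpiece2 hpiece3)
      _ = C * ∫ y in (t₃ + h)..b, Ec y := by rw [add_zero, add_zero, htrans]
    rw [hEc_eq hb.1]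
    exact max_le hfinal (mul_nonneg hCnn hEint)
  have hzero := my_gronwall hCnn hEc_cont hEc_nonneg hrec
  intro b hb
  have := hzero b hb
  rw [hEc_eq hb.1] at this
  have h2 : m b - m (b - h) ≤ max (m b - m (b - h)) 0 := le_max_left _ _
  rw [this] at h2
  linarith

private lemma m_anti_tail
    (hf_meas : Measurable f)
    (hf_pos : ∀ x ∈ Set.Ici (0 : ℝ), 0 < f x)
    (hf_cont : ContinuousOn f (Set.Ici 0))
    (hf_int : IntegrableOn f (Set.Ici 0))
    (hf_one : (∫ x in Set.Ici (0 : ℝ), f x) = 1)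
    (hm_loc : LocallyIntegrableOn m (Set.Ici 0))
    (hm_eq : ∀ t ∈ Set.Ici (0 : ℝ), m t = f t + ∫ x in (0 : ℝ)..t, m x * f (t - x))
    (hm_diff : ∀ x : ℝ, 0 < x → DifferentiableAt ℝ m x)
    (hm'_neg : ∀ x ∈ Set.Ioo 0 t₃, deriv m x < 0)
    (ht₃pos : 0 < t₃)
    (hr_ge' : ∀ t : ℝ, t₃ < t → ∀ x : ℝ, 0 < x → x < t →
      hazardRate f t ≤ hazardRate f (t - x)) :
    AntitoneOn m (Ici t₃) := by
  obtain ⟨h₀, hh₀, hh₀t₃, hm_small⟩ := exists_h0 hm_loc ht₃pos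
  have hE : ∀ {h : ℝ}, 0 < h → h ≤ h₀ → ∀ {b : ℝ}, t₃ + h ≤ b → m b ≤ m (b - h) := by
    intro h hh hhh₀ b hbB
    exact E_zero hf_meas hf_pos hf_cont hf_int hf_one hm_loc hm_eq hm_diff hm'_neg
      ht₃pos hr_ge' hh₀ hh₀t₃ hm_small hh hhh₀ hbB b ⟨hbB, le_rfl⟩
  have hclaim : ∀ n : ℕ, ∀ a b : ℝ, t₃ ≤ a → a ≤ b → b - a ≤ n * h₀ → m b ≤ m a := by
    intro n
    induction n with
    | zero =>
      intro a b ha hab hgap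
      push_cast at hgap
      have : b = a := le_antisymm (by linarith) hab
      rw [this]
    | succ n ih =>
      intro a b ha hab hgap
      push_cast at hgap
      rcases le_or_gt (b - a) h₀ with hle | hlt
      · rcases eq_or_lt_of_le hab with heq | hlt2
        · rw [← heq]
        · have := hE (h := b - a) (by linarith) hle (b := b) (by linarith)
          rw [show b - (b - a) = a by ring] at this
          exact this
      · have h1 : m b ≤ m (b - h₀) := hE (h := h₀) hh₀ le_rfl (b := b) (by linarith)
        have h2 : m (b - h₀) ≤ m a := by
          apply ih a (b - h₀) ha (by linarith)
          push_cast
          linarith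
        linarith
  intro a ha b hb hab
  obtain ⟨n, hn⟩ := exists_nat_gt ((b - a) / h₀)
  apply hclaim n a b ha hab
  rw [div_lt_iff₀ hh₀] at hn
  linarith

private lemma m_anti_glob
    (hf_meas : Measurable f)
    (hf_pos : ∀ x ∈ Set.Ici (0 : ℝ), 0 < f x)
    (hf_cont : ContinuousOn f (Set.Ici 0))
    (hf_int : IntegrableOn f (Set.Ici 0))
    (hf_one : (∫ x in Set.Ici (0 : ℝ), f x) = 1)
    (hm_loc : LocallyIntegrableOn m (Set.Ici 0))
    (hm_eq : ∀ t ∈ Set.Ici (0 : ℝ), m t = f t + ∫ x in (0 : ℝ)..t, m x * f (t - x))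
    (hm_diff : ∀ x : ℝ, 0 < x → DifferentiableAt ℝ m x)
    (hm'_neg : ∀ x ∈ Set.Ioo 0 t₃, deriv m x < 0)
    (ht₃pos : 0 < t₃)
    (hr_ge' : ∀ t : ℝ, t₃ < t → ∀ x : ℝ, 0 < x → x < t →
      hazardRate f t ≤ hazardRate f (t - x)) :
    AntitoneOn m (Ioi 0) := by
  have htail := m_anti_tail hf_meas hf_pos hf_cont hf_int hf_one hm_loc hm_eq hm_diff
    hm'_neg ht₃pos hr_ge'
  intro a ha b hb hab
  rcases le_total b t₃ with hbt | hbt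
  · exact m_anti_Ioc_weak hm_diff hm'_neg ⟨ha, le_trans hab hbt⟩ ⟨hb, hbt⟩ hab
  · rcases le_total a t₃ with hat | hat
    · calc m b ≤ m t₃ := htail (self_mem_Ici) hbt hbt
      _ ≤ m a := m_anti_Ioc_weak hm_diff hm'_neg ⟨ha, hat⟩ ⟨ht₃pos, le_rfl⟩ hat
    · exact htail hat hbt hab


/-- The pointwise derivative bound at `T > t₃`. -/
private lemma point_neg
    (hf_meas : Measurable f)
    (hf_pos : ∀ x ∈ Set.Ici (0 : ℝ), 0 < f x)
    (hf_cont : ContinuousOn f (Set.Ici 0))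
    (hf_int : IntegrableOn f (Set.Ici 0))
    (hf_one : (∫ x in Set.Ici (0 : ℝ), f x) = 1)
    (hm_loc : LocallyIntegrableOn m (Set.Ici 0))
    (hm_eq : ∀ t ∈ Set.Ici (0 : ℝ), m t = f t + ∫ x in (0 : ℝ)..t, m x * f (t - x))
    (hm_diff : ∀ x : ℝ, 0 < x → DifferentiableAt ℝ m x)
    (ht₁pos : 0 < t₁) (ht₁₃ : t₁ < t₃)
    (hr_ge : ∀ t : ℝ, t₃ < t → ∀ x : ℝ, 0 < x → x < t →
      hazardRate f t ≤ hazardRate f (t - x) ∧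
        (t - x < t₁ → hazardRate f t < hazardRate f (t - x)))
    (hanti : AntitoneOn m (Set.Ioi 0))
    {T α β : ℝ} (hT : t₃ < T) (hα : 0 < α) (hαβ : α < β) (hβ : β < t₁)
    (hLneg : m (T - α) < m (T - β)) :
    deriv m T < 0 := by
  have ht₃pos : 0 < t₃ := lt_trans ht₁pos ht₁₃
  have hT0 : (0:ℝ) < T := lt_trans ht₃pos hT
  have hr_ge' : ∀ t : ℝ, t₃ < t → ∀ x : ℝ, 0 < x → x < t →
      hazardRate f t ≤ hazardRate f (t - x) := fun t ht x hx hxt => (hr_ge t ht x hx hxt).1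
  obtain ⟨h₀, hh₀, hh₀t₃, hm_small⟩ := exists_h0 hm_loc ht₃pos
  set ψ : ℝ → ℝ := fun x => f x - hazardRate f T * survival f x with hψ
  have hψcont : ∀ {c : ℝ}, 0 ≤ c → ContinuousOn ψ (Icc 0 c) :=
    fun hc => psi_contOn hf_cont hf_int hf_one T hc
  -- minimum of ψ on [α, β]
  obtain ⟨x₀, hx₀, hminψ⟩ := isCompact_Icc.exists_isMinOn
    (⟨α, le_rfl, le_of_lt hαβ⟩ : (Icc α β).Nonempty)
    ((hψcont (by linarith : (0:ℝ) ≤ β)).mono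
      (fun x hx => ⟨le_trans (le_of_lt hα) hx.1, hx.2⟩))
  set c := ψ x₀ with hc
  have hcpos : 0 < c := by
    have hx₀pos : 0 < x₀ := lt_of_lt_of_le hα hx₀.1
    have hx₀T : x₀ < T := by linarith [hx₀.2]
    have hstrict := (hr_ge T hT (T - x₀) (by linarith) (by linarith)).2
    rw [show T - (T - x₀) = x₀ by ring] at hstrict
    have h2 := hstrict (by linarith [hx₀.2])
    have hfx := haz_mul hf_pos hf_int (le_of_lt hx₀pos)
    have hFb := surv_pos hf_pos hf_int (le_of_lt hx₀pos)
    have : c = (hazardRate f x₀ - hazardRate f T) * survival f x₀ := by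
      simp only [hc, hψ]
      rw [sub_mul, hfx]
    rw [this]
    exact mul_pos (by linarith) hFb
  have hcle : ∀ x ∈ Icc α β, c ≤ ψ x := fun x hx => hminψ hx
  -- the comparison function G
  set M : ℝ → ℝ := fun y => ∫ u in (0:ℝ)..y, m u with hM
  set G : ℝ → ℝ := fun s => M (s - α) - M (s - β) with hG
  -- step inequality for small h
  set h₁ := min (T - t₃) h₀ with hh₁
  have hh₁pos : 0 < h₁ := lt_min (by linarith) hh₀
  have hstep : ∀ h : ℝ, 0 < h → h < h₁ → m T - m (T - h) ≤ c * (G T - G (T - h)) := by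
    intro h hhpos hhlt
    have hhT₃ : h < T - t₃ := lt_of_lt_of_le hhlt (min_le_left _ _)
    have hhh₀ : h ≤ h₀ := le_of_lt (lt_of_lt_of_le hhlt (min_le_right _ _))
    have haT : t₃ ≤ T - h := by linarith
    have hβTh : β < T - h := by linarith
    have hdia := diamond hf_meas hf_pos hf_cont hf_int hf_one hm_loc hm_eq hm_diff
      ht₃pos hr_ge' hm_small haT (by linarith : T - h < T) (by linarith)
    -- integrability of the pair integrand on subintervals of [0, T-h]
    have hpair_int : ∀ {u v : ℝ}, u ∈ Icc (0:ℝ) (T - h) → v ∈ Icc (0:ℝ) (T - h) →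
        IntervalIntegrable (fun x => ψ x * (m (T - x) - m (T - h - x))) volume u v := by
      intro u v hu hv
      have heq : (fun x => ψ x * (m (T - x) - m (T - h - x)))
          = fun x => ψ x * m (T - x) - ψ x * m (T - h - x) := by
        funext x; ring
      rw [heq]
      have hu' : u ∈ Icc (0:ℝ) T := ⟨hu.1, by linarith [hu.2]⟩
      have hv' : v ∈ Icc (0:ℝ) T := ⟨hv.1, by linarith [hv.2]⟩
      exact (gm_intInt hm_loc hu' hv' (hψcont (le_of_lt hT0))).sub
        (gm_intInt hm_loc hu hv (hψcont (by linarith : (0:ℝ) ≤ T - h)))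
    have hmemα : α ∈ Icc (0:ℝ) (T - h) := ⟨le_of_lt hα, by linarith⟩
    have hmemβ : β ∈ Icc (0:ℝ) (T - h) := ⟨by linarith, by linarith⟩
    have hmem0 : (0:ℝ) ∈ Icc (0:ℝ) (T - h) := ⟨le_rfl, by linarith⟩
    have hmemTh : T - h ∈ Icc (0:ℝ) (T - h) := ⟨by linarith, le_rfl⟩
    -- split
    have hsplit : (∫ x in (0:ℝ)..(T - h), ψ x * (m (T - x) - m (T - h - x)))
        = (∫ x in (0:ℝ)..α, ψ x * (m (T - x) - m (T - h - x)))
          + ((∫ x in α..β, ψ x * (m (T - x) - m (T - h - x)))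
            + ∫ x in β..(T - h), ψ x * (m (T - x) - m (T - h - x))) := by
      rw [intervalIntegral.integral_add_adjacent_intervals
        (hpair_int hmemα hmemβ) (hpair_int hmemβ hmemTh),
        intervalIntegral.integral_add_adjacent_intervals
        (hpair_int hmem0 hmemα) (hpair_int hmemα hmemTh)]
    -- pair is nonpositive everywhere on (0, T-h)
    have hpair_np : ∀ x : ℝ, 0 < x → x < T - h → m (T - x) - m (T - h - x) ≤ 0 := by
      intro x hx1 hx2
      have := hanti (by simp; linarith : T - h - x ∈ Ioi (0:ℝ))
        (by simp; linarith : T - x ∈ Ioi (0:ℝ)) (by linarith)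
      linarith
    -- outer pieces nonpositive
    have hpiece1 : (∫ x in (0:ℝ)..α, ψ x * (m (T - x) - m (T - h - x))) ≤ 0 := by
      apply int_nonpos (le_of_lt hα)
      intro x hx1 hx2
      exact mul_nonpos_of_nonneg_of_nonpos
        (psi_nonneg hf_pos hf_int hr_ge' hT hx1 (by linarith))
        (hpair_np x hx1 (by linarith))
    have hpiece3 : (∫ x in β..(T - h), ψ x * (m (T - x) - m (T - h - x))) ≤ 0 := by
      apply int_nonpos (le_of_lt hβTh)
      intro x hx1 hx2
      exact mul_nonpos_of_nonneg_of_nonpos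
        (psi_nonneg hf_pos hf_int hr_ge' hT (by linarith) (by linarith))
        (hpair_np x (by linarith) hx2)
    -- middle piece
    have hmid : (∫ x in α..β, ψ x * (m (T - x) - m (T - h - x)))
        ≤ c * ((∫ x in α..β, m (T - x)) - ∫ x in α..β, m (T - h - x)) := by
      have hint1 : IntervalIntegrable (fun x => m (T - x)) volume α β :=
        m_refl_intInt hm_loc (⟨le_of_lt hα, by linarith⟩ : α ∈ Icc (0:ℝ) T)
          (⟨by linarith, by linarith⟩ : β ∈ Icc (0:ℝ) T)
      have hint2 : IntervalIntegrable (fun x => m (T - h - x)) volume α β := by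
        have := m_refl_intInt hm_loc (⟨le_of_lt hα, by linarith⟩ : α ∈ Icc (0:ℝ) (T - h))
          (⟨by linarith, by linarith⟩ : β ∈ Icc (0:ℝ) (T - h))
        simpa using this
      have step1 : (∫ x in α..β, ψ x * (m (T - x) - m (T - h - x)))
          ≤ ∫ x in α..β, c * (m (T - x) - m (T - h - x)) := by
        apply int_mono_Ioo (le_of_lt hαβ) (hpair_int hmemα hmemβ)
          ((hint1.sub hint2).const_mul c)
        intro x hx1 hx2
        have hpair := hpair_np x (by linarith) (by linarith)
        exact mul_le_mul_of_nonpos_right (hcle x ⟨le_of_lt hx1, le_of_lt hx2⟩) hpair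
      calc (∫ x in α..β, ψ x * (m (T - x) - m (T - h - x)))
          ≤ ∫ x in α..β, c * (m (T - x) - m (T - h - x)) := step1
        _ = c * ((∫ x in α..β, m (T - x)) - ∫ x in α..β, m (T - h - x)) := by
            rw [intervalIntegral.integral_const_mul, intervalIntegral.integral_sub hint1 hint2]
    -- rewrite middle majorant via G
    have hGid : ((∫ x in α..β, m (T - x)) - ∫ x in α..β, m (T - h - x)) = G T - G (T - h) := by
      have e1 : (∫ x in α..β, m (T - x)) = ∫ y in (T - β)..(T - α), m y := by
        have := intervalIntegral.integral_comp_sub_left m T (a := α) (b := β)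
        rw [this]
      have e2 : (∫ x in α..β, m (T - h - x)) = ∫ y in (T - h - β)..(T - h - α), m y := by
        have heq : (fun x : ℝ => m (T - h - x)) = fun x => m ((T - h) - x) := by
          funext x; ring_nf
        have := intervalIntegral.integral_comp_sub_left m (T - h) (a := α) (b := β)
        rw [heq, this]
      have e3 : (∫ y in (T - β)..(T - α), m y) = M (T - α) - M (T - β) := by
        have := intervalIntegral.integral_interval_sub_left
          (m_intInt hm_loc le_rfl (by linarith : (0:ℝ) ≤ T - α))
          (m_intInt hm_loc le_rfl (by linarith : (0:ℝ) ≤ T - β))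
        rw [← this]
      have e4 : (∫ y in (T - h - β)..(T - h - α), m y) = M (T - h - α) - M (T - h - β) := by
        have := intervalIntegral.integral_interval_sub_left
          (m_intInt hm_loc le_rfl (by linarith : (0:ℝ) ≤ T - h - α))
          (m_intInt hm_loc le_rfl (by linarith : (0:ℝ) ≤ T - h - β))
        rw [← this]
      rw [e1, e2, e3, e4]
    calc m T - m (T - h)
        ≤ ∫ x in (0:ℝ)..(T - h), ψ x * (m (T - x) - m (T - h - x)) := hdia
      _ = _ := hsplit
      _ ≤ 0 + ((c * ((∫ x in α..β, m (T - x)) - ∫ x in α..β, m (T - h - x))) + 0) :=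
          add_le_add hpiece1 (add_le_add hmid hpiece3)
      _ = c * (G T - G (T - h)) := by rw [zero_add, add_zero, hGid]
  -- derivative of G at T
  have hMd : ∀ {y : ℝ}, 0 < y → HasDerivAt M (m y) y := by
    intro y hy
    apply intervalIntegral.integral_hasDerivAt_right (m_intInt hm_loc le_rfl (le_of_lt hy))
    · exact AEStronglyMeasurable.stronglyMeasurableAtFilter_of_mem
        (((m_contOn hm_diff).aestronglyMeasurable measurableSet_Ioi))
        (Ioi_mem_nhds hy)
    · exact (hm_diff y hy).continuousAt
  have hGd : HasDerivAt G (m (T - α) - m (T - β)) T := by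
    have h1 : HasDerivAt (fun s : ℝ => M (s - α)) (m (T - α)) T := by
      have := (hMd (by linarith : (0:ℝ) < T - α)).comp T ((hasDerivAt_id T).sub_const α)
      exact this.congr_deriv (mul_one _)
    have h2 : HasDerivAt (fun s : ℝ => M (s - β)) (m (T - β)) T := by
      have := (hMd (by linarith : (0:ℝ) < T - β)).comp T ((hasDerivAt_id T).sub_const β)
      exact this.congr_deriv (mul_one _)
    exact h1.sub h2
  -- pass to the limit h → 0⁺
  have hφ : Filter.Tendsto (fun h : ℝ => T - h) (nhdsWithin 0 (Ioi 0))
      (nhdsWithin T {T}ᶜ) := by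
    rw [tendsto_nhdsWithin_iff]
    constructor
    · have h3 : Filter.Tendsto (fun h : ℝ => T - h) (nhds 0) (nhds (T - 0)) :=
        (continuous_const.sub continuous_id).tendsto 0
      rw [sub_zero] at h3
      exact h3.mono_left nhdsWithin_le_nhds
    · apply Filter.eventually_of_mem self_mem_nhdsWithin
      intro h hh
      have h4 : (0:ℝ) < h := hh
      simp only [Set.mem_compl_iff, Set.mem_singleton_iff]
      intro hcon
      have : h = 0 := by linarith [hcon, sub_eq_self.1 hcon]
      linarith
  have hslope_gen : ∀ {F : ℝ → ℝ} {L : ℝ}, HasDerivAt F L T →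
      Filter.Tendsto (fun h : ℝ => (F T - F (T - h)) / h)
        (nhdsWithin 0 (Ioi 0)) (nhds L) := by
    intro F L hF
    have h1 := hasDerivAt_iff_tendsto_slope.1 hF
    have h2 := h1.comp hφ
    have heq : (fun h : ℝ => (F T - F (T - h)) / h) = (slope F T) ∘ (fun h : ℝ => T - h) := by
      funext h
      simp only [Function.comp_apply, slope_def_field]
      rw [show T - h - T = -h by ring, div_neg, ← neg_div, neg_sub]
    rw [heq]
    exact h2
  have hslope_m := hslope_gen (hm_diff T hT0).hasDerivAt
  have hslope_G := hslope_gen hGd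
  have hlim2 : Filter.Tendsto (fun h : ℝ => c * ((G T - G (T - h)) / h))
      (nhdsWithin 0 (Ioi 0)) (nhds (c * (m (T - α) - m (T - β)))) :=
    hslope_G.const_mul c
  have hineq : (fun h : ℝ => (m T - m (T - h)) / h)
      ≤ᶠ[nhdsWithin 0 (Ioi 0)] fun h : ℝ => c * ((G T - G (T - h)) / h) := by
    apply Filter.eventually_of_mem (Ioo_mem_nhdsGT_of_mem (⟨le_rfl, hh₁pos⟩ : (0:ℝ) ∈ Ico 0 h₁))
    intro h hh
    have hstep' := hstep h hh.1 hh.2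
    have h5 : (m T - m (T - h)) / h ≤ (c * (G T - G (T - h))) / h :=
      (div_le_div_iff_of_pos_right hh.1).2 hstep'
    rwa [mul_div_assoc] at h5
  have hfin : deriv m T ≤ c * (m (T - α) - m (T - β)) :=
    le_of_tendsto_of_tendsto hslope_m hlim2 hineq
  have : c * (m (T - α) - m (T - β)) < 0 := mul_neg_of_pos_of_neg hcpos (by linarith)
  linarith


/-- **Final step in the proof of Proposition 1 (decrease on `[t₃, ∞)`).**
Let `f` be a positive probability density on `[0, ∞)`, continuous and piecewise
continuously differentiable, with hazard rate `r = f / F̄`, and fix `0 < t₁ < t₃`.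
Assume for every `t > t₃` and every `x` with `0 < x < t` one has `r (t - x) ≥ r t`, with
strict inequality whenever `t - x < t₁`.  Let `m` be the renewal density, i.e. the
solution of `m t = f t + ∫ x in 0..t, m x * f (t - x)` for `t ≥ 0`; assume `m` is
differentiable with `m' x < 0` for all `x ∈ (0, t₃)`, and `r' t ≤ 0` for `t ≥ t₃`.
Then `m' t < 0` for all `t > t₃`; in particular `m` is strictly decreasing on `[t₃, ∞)`. -/
theorem renewal_density_strict_decrease_on_tail
    (t₁ t₃ : ℝ) (ht₁ : 0 < t₁) (ht₁₃ : t₁ < t₃)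
    (f m : ℝ → ℝ)
    (hf_meas : Measurable f)
    (hf_pos : ∀ x ∈ Set.Ici (0 : ℝ), 0 < f x)
    (hf_cont : ContinuousOn f (Set.Ici 0))
    (hf_int : IntegrableOn f (Set.Ici 0))
    (hf_one : (∫ x in Set.Ici (0 : ℝ), f x) = 1)
    (hf_pc1 : PiecewiseC1On f (Set.Ici 0))
    (hr_ge : ∀ t : ℝ, t₃ < t → ∀ x : ℝ, 0 < x → x < t →
      hazardRate f t ≤ hazardRate f (t - x) ∧
        (t - x < t₁ → hazardRate f t < hazardRate f (t - x)))
    (hr'_le : ∀ t ∈ Set.Ici t₃, derivWithin (hazardRate f) (Set.Ici t₃) t ≤ 0)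
    (hm_loc : LocallyIntegrableOn m (Set.Ici 0))
    (hm_eq : ∀ t ∈ Set.Ici (0 : ℝ), m t = f t + ∫ x in (0 : ℝ)..t, m x * f (t - x))
    (hm_diff : ∀ x : ℝ, 0 < x → DifferentiableAt ℝ m x)
    (hm'_neg : ∀ x ∈ Set.Ioo 0 t₃, deriv m x < 0) :
    (∀ t : ℝ, t₃ < t → deriv m t < 0) ∧ StrictAntiOn m (Set.Ici t₃) := by
  have ht₃pos : 0 < t₃ := lt_trans ht₁ ht₁₃
  have hr_ge' : ∀ t : ℝ, t₃ < t → ∀ x : ℝ, 0 < x → x < t →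
      hazardRate f t ≤ hazardRate f (t - x) := fun t ht x hx hxt => (hr_ge t ht x hx hxt).1
  have hanti : AntitoneOn m (Ioi 0) := m_anti_glob hf_meas hf_pos hf_cont hf_int hf_one
    hm_loc hm_eq hm_diff hm'_neg ht₃pos hr_ge'
  have hSA : StrictAntiOn m (Ioc 0 t₃) := m_strictAnti_Ioc hm_diff hm'_neg
  have hKEY : ∀ n : ℕ, ∀ T : ℝ, t₃ < T → T < t₃ + n * t₁ → deriv m T < 0 := by
    intro n
    induction n with
    | zero =>
      intro T hT hT2
      push_cast at hT2
      linarith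
    | succ n ih =>
      intro T hT hT2
      push_cast at hT2
      have htwo : ∀ u v : ℝ, 0 < u → u < v → v < t₃ + n * t₁ ∨ v ≤ t₃ → m v < m u := by
        intro u v hu huv hcase
        rcases le_or_gt v t₃ with hv | hv
        · exact hSA ⟨hu, by linarith⟩ ⟨by linarith, hv⟩ huv
        · have hvlt : v < t₃ + n * t₁ := by
            rcases hcase with h | h
            · exact h
            · linarith
          have hSA2 : StrictAntiOn m (Icc t₃ v) := by
            apply strictAntiOn_of_deriv_neg (convex_Icc _ _)
              ((m_contOn hm_diff).mono (fun x hx => lt_of_lt_of_le ht₃pos hx.1))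
            intro x hx
            rw [interior_Icc] at hx
            exact ih x hx.1 (by linarith [hx.2])
          rcases le_or_gt t₃ u with hut | hut
          · exact hSA2 ⟨hut, le_of_lt huv⟩ ⟨by linarith, le_rfl⟩ huv
          · calc m v < m t₃ := hSA2 ⟨le_rfl, le_of_lt hv⟩ ⟨le_of_lt hv, le_rfl⟩ hv
            _ < m u := hSA ⟨hu, le_of_lt hut⟩ ⟨ht₃pos, le_rfl⟩ hut
      set γ := max (T - (t₃ + n * t₁)) 0 with hγ
      have hγ0 : 0 ≤ γ := le_max_right _ _
      have hγlt : γ < t₁ := by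
        apply max_lt _ ht₁
        linarith
      set α := (γ + t₁) / 2 with hα
      set β := (α + t₁) / 2 with hβ
      have hα0 : 0 < α := by simp only [hα]; linarith
      have hαt₁ : α < t₁ := by simp only [hα]; linarith
      have hαβ : α < β := by simp only [hβ]; linarith
      have hβt₁ : β < t₁ := by simp only [hβ]; linarith
      have hγα : γ < α := by simp only [hα]; linarith
      have hTα : T - α < t₃ + n * t₁ := by
        have h1 : T - (t₃ + n * t₁) ≤ γ := le_max_left _ _
        linarith
      have hTβ0 : 0 < T - β := by linarith
      have hLneg : m (T - α) < m (T - β) :=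
        htwo (T - β) (T - α) hTβ0 (by linarith) (Or.inl hTα)
      exact point_neg hf_meas hf_pos hf_cont hf_int hf_one hm_loc hm_eq hm_diff
        ht₁ ht₁₃ hr_ge hanti hT hα0 hαβ hβt₁ hLneg
  have hpart1 : ∀ t : ℝ, t₃ < t → deriv m t < 0 := by
    intro T hT
    obtain ⟨n, hn⟩ := exists_nat_gt ((T - t₃) / t₁)
    apply hKEY n T hT
    rw [div_lt_iff₀ ht₁] at hn
    linarith
  refine ⟨hpart1, ?_⟩
  apply strictAntiOn_of_deriv_neg (convex_Ici t₃)
    ((m_contOn hm_diff).mono (fun x hx => lt_of_lt_of_le ht₃pos hx))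
  intro x hx
  rw [interior_Ici] at hx
  exact hpart1 x hx


end RenewalProof
end

section
/- Let X be a random variable on ℕ = {1, 2, …}, p ∈ (0,1), q = 1 − p, and let Y = Σ_{k=1}^{T} X_k be the compound geometric sum, where T is geometric with P(T = n) = p q^{n−1} and X₁, X₂, … are i.i.d. copies of X independent of T. Write f_n = P(X = n), F̄_n = P(X ≥ n), Ḡ_n = P(Y ≥ n). Then for every n ∈ ℕ: F̄_n (Ḡ_{n+2} Ḡ_n − Ḡ_{n+1}²) = p Ḡ_n (F̄_{n+2} F̄_n − F̄_{n+1}²) + q Σ_{k=2}^{n} (F̄_{n+1} f_{k−1} − F̄_n f_k)(Ḡ_{n+1} Ḡ_{n+1−k} − Ḡ_n Ḡ_{n+2−k}). -/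
open Finset

/-- Convolution of two distributions on `ℕ`. -/
def convNat (a b : ℕ → ℝ) : ℕ → ℝ := fun n => ∑ k ∈ Finset.range (n + 1), a k * b (n - k)

/-- `j`-fold convolution power of `f` (with `convPowNat f 0` the unit mass at `0`),
so that `convPowNat f j` is the distribution of the sum of `j` i.i.d. copies of `X`. -/
def convPowNat (f : ℕ → ℝ) : ℕ → ℕ → ℝ
  | 0 => fun n => if n = 0 then 1 else 0
  | j + 1 => convNat (convPowNat f j) f

/-- The distribution `g` of the compound geometric sum `Y = Σ_{k=1}^T X_k`, where
`P(T = j) = p q^{j-1}` (`q = 1 - p`) and the `X_k` are i.i.d. with distribution `f`,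
independent of `T`: `g n = Σ_{j≥1} p q^{j-1} f^{*j} n`. -/
noncomputable def compoundGeom (p : ℝ) (f : ℕ → ℝ) : ℕ → ℝ :=
  fun n => ∑' j : ℕ, p * (1 - p) ^ j * convPowNat f (j + 1) n

/-- Tail (survival) function `n ↦ P(Z ≥ n)` of a distribution `h` on `ℕ`. -/
noncomputable def tailNat (h : ℕ → ℝ) : ℕ → ℝ := fun n => ∑' k : ℕ, h (n + k)

section Aux

variable {p : ℝ} {f : ℕ → ℝ}

lemma convPow_nonneg (hf : ∀ n, 0 ≤ f n) : ∀ j n, 0 ≤ convPowNat f j n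
  | 0, n => by dsimp [convPowNat]; split <;> norm_num
  | j + 1, n => by
      dsimp [convPowNat, convNat]
      exact Finset.sum_nonneg fun k _ => mul_nonneg (convPow_nonneg hf j k) (hf _)

lemma convPow_hasSum (hf : ∀ n, 0 ≤ f n) (hs : HasSum f 1) : ∀ j, HasSum (convPowNat f j) 1
  | 0 => by simpa [convPowNat] using hasSum_ite_eq 0 (1 : ℝ)
  | j + 1 => by
      have ih := convPow_hasSum hf hs j
      have h1 : Summable fun x => ‖convPowNat f j x‖ := summable_norm_iff.mpr ih.summable
      have h2 : Summable fun x => ‖f x‖ := summable_norm_iff.mpr hs.summable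
      have h3 := hasSum_sum_range_mul_of_summable_norm h1 h2
      rw [ih.tsum_eq, hs.tsum_eq, one_mul] at h3
      exact h3

lemma convPow_le_one (hf : ∀ n, 0 ≤ f n) (hs : HasSum f 1) (j n : ℕ) :
    convPowNat f j n ≤ 1 :=
  le_hasSum (convPow_hasSum hf hs j) n fun k _ => convPow_nonneg hf j k

lemma summable_tail {h : ℕ → ℝ} (hs : Summable h) (m : ℕ) : Summable fun k => h (m + k) :=
  ((summable_nat_add_iff m).2 hs).congr fun k => by rw [add_comm]

lemma tailNat_step {h : ℕ → ℝ} (hs : Summable h) (m : ℕ) :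
    tailNat h m = h m + tailNat h (m + 1) := by
  have h1 := summable_tail hs m
  rw [tailNat, Summable.tsum_eq_zero_add h1, add_zero]
  congr 1
  rw [tailNat]
  apply tsum_congr
  intro k
  congr 1
  omega

lemma tailNat_nonneg {h : ℕ → ℝ} (hn : ∀ n, 0 ≤ h n) (m : ℕ) : 0 ≤ tailNat h m :=
  tsum_nonneg fun k => hn _

lemma tailNat_le_tsum {h : ℕ → ℝ} (hn : ∀ n, 0 ≤ h n) (hs : Summable h) (m : ℕ) :
    tailNat h m ≤ ∑' n, h n := by
  have := Summable.sum_add_tsum_nat_add m hs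
  have h2 : tailNat h m = ∑' i, h (i + m) := tsum_congr fun k => by rw [add_comm]
  have h3 : 0 ≤ ∑ i ∈ range m, h i := Finset.sum_nonneg fun i _ => hn i
  linarith

end Aux
section Main

variable {p : ℝ} {f : ℕ → ℝ}
variable (hp : p ∈ Set.Ioo (0 : ℝ) 1) (hf0 : f 0 = 0)
  (hf_nonneg : ∀ n, 0 ≤ f n) (hf_sum : HasSum f 1)

include hp hf_nonneg hf_sum

lemma summable_term (n : ℕ) :
    Summable fun j => p * (1 - p) ^ j * convPowNat f (j + 1) n := by
  obtain ⟨hp0, hp1⟩ := hp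
  have hq0 : (0 : ℝ) ≤ 1 - p := by linarith
  have hq1 : (1 : ℝ) - p < 1 := by linarith
  apply Summable.of_nonneg_of_le
    (fun j => mul_nonneg (mul_nonneg hp0.le (pow_nonneg hq0 j)) (convPow_nonneg hf_nonneg _ _))
    (fun j => ?_) ((summable_geometric_of_lt_one hq0 hq1).mul_left p)
  calc p * (1 - p) ^ j * convPowNat f (j + 1) n
      ≤ p * (1 - p) ^ j * 1 :=
        mul_le_mul_of_nonneg_left (convPow_le_one hf_nonneg hf_sum _ _)
          (mul_nonneg hp0.le (pow_nonneg hq0 j))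
    _ = p * (1 - p) ^ j := mul_one _

lemma summable_F2 :
    Summable (fun jn : ℕ × ℕ => p * (1 - p) ^ jn.1 * convPowNat f (jn.1 + 1) jn.2) := by
  obtain ⟨hp0, hp1⟩ := hp
  have hq0 : (0 : ℝ) ≤ 1 - p := by linarith
  have hq1 : (1 : ℝ) - p < 1 := by linarith
  have hnn : 0 ≤ fun jn : ℕ × ℕ => p * (1 - p) ^ jn.1 * convPowNat f (jn.1 + 1) jn.2 :=
    fun jn => mul_nonneg (mul_nonneg hp0.le (pow_nonneg hq0 _)) (convPow_nonneg hf_nonneg _ _)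
  rw [summable_prod_of_nonneg hnn]
  refine ⟨fun j => ?_, ?_⟩
  · dsimp only
    exact ((convPow_hasSum hf_nonneg hf_sum (j + 1)).summable).mul_left _
  · apply (((summable_geometric_of_lt_one hq0 hq1).mul_left p)).congr
    intro j
    dsimp only
    rw [tsum_mul_left, (convPow_hasSum hf_nonneg hf_sum (j + 1)).tsum_eq, mul_one]

lemma summable_g : Summable (compoundGeom p f) := by
  have h := (summable_F2 hp hf_nonneg hf_sum).prod_symm.prod
  exact h.congr fun n => tsum_congr fun j => rfl

lemma g_nonneg : ∀ n, 0 ≤ compoundGeom p f n := by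
  intro n
  obtain ⟨hp0, hp1⟩ := hp
  have hq0 : (0 : ℝ) ≤ 1 - p := by linarith
  exact tsum_nonneg fun j =>
    mul_nonneg (mul_nonneg hp0.le (pow_nonneg hq0 _)) (convPow_nonneg hf_nonneg _ _)

lemma tsum_g : ∑' n, compoundGeom p f n = 1 := by
  have hp0 := hp.1
  have hp1 := hp.2
  have hq0 : (0 : ℝ) ≤ 1 - p := by linarith
  have hq1 : (1 : ℝ) - p < 1 := by linarith
  have hu : Summable (Function.uncurry fun j n => p * (1 - p) ^ j * convPowNat f (j + 1) n) :=
    (summable_F2 hp hf_nonneg hf_sum).congr fun jn => rfl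
  have hcomm := Summable.tsum_comm (f := fun j n => p * (1 - p) ^ j * convPowNat f (j + 1) n) hu
  have : ∑' (n : ℕ), compoundGeom p f n
      = ∑' (j : ℕ) (n : ℕ), p * (1 - p) ^ j * convPowNat f (j + 1) n := hcomm
  rw [this]
  have h2 : ∀ j : ℕ, ∑' n, p * (1 - p) ^ j * convPowNat f (j + 1) n = p * (1 - p) ^ j := by
    intro j
    rw [tsum_mul_left, (convPow_hasSum hf_nonneg hf_sum (j + 1)).tsum_eq, mul_one]
  rw [tsum_congr h2, tsum_mul_left, tsum_geometric_of_lt_one hq0 hq1]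
  have : (1 : ℝ) - (1 - p) = p := by ring
  rw [this]
  field_simp

lemma G0 : tailNat (compoundGeom p f) 0 = 1 := by
  rw [tailNat]
  rw [show (fun k : ℕ => compoundGeom p f (0 + k)) = compoundGeom p f by
    funext k; rw [zero_add]]
  exact tsum_g hp hf_nonneg hf_sum

omit hp hf_nonneg hf_sum in
include hf0 in
lemma g0 : compoundGeom p f 0 = 0 := by
  rw [compoundGeom]
  convert tsum_zero with j
  have h1 : convPowNat f (j + 1) 0 = 0 := by
    show convNat (convPowNat f j) f 0 = 0
    simp [convNat, hf0]
  rw [h1, mul_zero]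

omit hp hf_nonneg in
lemma F0 : tailNat f 0 = 1 := by
  rw [tailNat]
  rw [show (fun k : ℕ => f (0 + k)) = f by funext k; rw [zero_add]]
  exact hf_sum.tsum_eq

omit hp hf_nonneg in
include hf0 in
lemma F1 : tailNat f 1 = 1 := by
  have := tailNat_step hf_sum.summable 0
  rw [F0 hf_sum, hf0] at this
  linarith

include hf0 in
lemma G1 : tailNat (compoundGeom p f) 1 = 1 := by
  have := tailNat_step (summable_g hp hf_nonneg hf_sum) 0
  rw [G0 hp hf_nonneg hf_sum, g0 hf0] at this
  linarith

omit hp hf_nonneg in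
lemma fF (s : ℕ) : f s = tailNat f s - tailNat f (s + 1) := by
  have := tailNat_step hf_sum.summable s
  linarith
lemma g_rec (n : ℕ) : compoundGeom p f n
    = p * f n + (1 - p) * ∑ k ∈ range (n + 1), compoundGeom p f k * f (n - k) := by
  have hs := summable_term hp hf_nonneg hf_sum (n := n)
  rw [compoundGeom, Summable.tsum_eq_zero_add hs]
  have hP1 : convPowNat f (0 + 1) n = f n := by
    show convNat (convPowNat f 0) f n = f n
    rw [convNat]
    rw [Finset.sum_eq_single 0]
    · simp [convPowNat]
    · intro k _ hk
      simp [convPowNat, hk]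
    · intro h
      exact absurd (Finset.mem_range.2 (Nat.succ_pos n)) h
  rw [hP1, pow_zero, mul_one]
  congr 1
  have hterm : ∀ j : ℕ, p * (1 - p) ^ (j + 1) * convPowNat f (j + 1 + 1) n
      = ∑ k ∈ range (n + 1), (1 - p) * (p * (1 - p) ^ j * convPowNat f (j + 1) k * f (n - k)) := by
    intro j
    show p * (1 - p) ^ (j + 1) * convNat (convPowNat f (j + 1)) f n = _
    rw [convNat, Finset.mul_sum]
    apply Finset.sum_congr rfl
    intro k _
    ring
  rw [tsum_congr hterm]
  rw [Summable.tsum_finsetSum (fun k _ => (((summable_term hp hf_nonneg hf_sum (n := k)).mul_right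
    (f (n - k))).mul_left (1 - p)))]
  rw [Finset.mul_sum]
  apply Finset.sum_congr rfl
  intro k _
  rw [tsum_mul_left, tsum_mul_right]
  rfl

lemma conv_eval (s : ℕ) : ∑ k ∈ range (s + 1), compoundGeom p f k * f (s - k)
    = (compoundGeom p f s - p * f s) * (1 - p)⁻¹ := by
  have h1 : (1 : ℝ) - p ≠ 0 := by have := hp.2; intro h; linarith [sub_eq_zero.mp h]
  have h2 := g_rec hp hf_nonneg hf_sum s
  field_simp
  linarith
lemma tail_conv (m : ℕ) :
    ∑' t : ℕ, ∑ k ∈ range (m + t + 1), compoundGeom p f k * f (m + t - k)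
      = ∑ k ∈ range (m + 1), compoundGeom p f k * tailNat f (m - k)
        + tailNat (compoundGeom p f) (m + 1) := by
  have hgs : Summable (compoundGeom p f) := summable_g hp hf_nonneg hf_sum
  have hgn : ∀ n, 0 ≤ compoundGeom p f n := g_nonneg hp hf_nonneg hf_sum
  set g : ℕ → ℝ := compoundGeom p f with hgdef
  set h : ℕ × ℕ → ℝ :=
    fun tk => if tk.2 ≤ m + tk.1 then g tk.2 * f (m + tk.1 - tk.2) else 0 with hh
  have hnn : 0 ≤ h := by
    intro tk
    dsimp only [h]
    split
    · exact mul_nonneg (hgn _) (hf_nonneg _)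
    · exact le_refl 0
  have hzero : ∀ t : ℕ, ∀ k ∉ range (m + t + 1), h (t, k) = 0 := by
    intro t k hk
    rw [Finset.mem_range, not_lt] at hk
    exact if_neg (by omega)
  have s1 : ∀ t, ∑' k, h (t, k) = ∑ k ∈ range (m + t + 1), g k * f (m + t - k) := by
    intro t
    rw [tsum_eq_sum (hzero t)]
    refine Finset.sum_congr rfl fun k hk => ?_
    rw [Finset.mem_range] at hk
    exact if_pos (by omega)
  have hconvs : Summable fun t => ∑ k ∈ range (m + t + 1), g k * f (m + t - k) := by
    have hbase : Summable fun t => (g (m + t) - p * f (m + t)) * (1 - p)⁻¹ :=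
      ((summable_tail hgs m).sub ((summable_tail hf_sum.summable m).mul_left p)).mul_right _
    exact hbase.congr fun t => (conv_eval hp hf_nonneg hf_sum (m + t)).symm
  have s2 : Summable h := by
    rw [summable_prod_of_nonneg hnn]
    refine ⟨fun t => summable_of_ne_finset_zero (hzero t), ?_⟩
    exact hconvs.congr fun t => (s1 t).symm
  have s4 : ∀ k, ∑' t, h (t, k) = (if k ≤ m then g k * tailNat f (m - k) else g k) := by
    intro k
    rcases le_or_gt k m with hk | hk
    · rw [if_pos hk]
      have he : ∀ t, h (t, k) = g k * f ((m - k) + t) := by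
        intro t
        dsimp only [h]
        rw [if_pos (by omega)]
        congr 2
        omega
      rw [tsum_congr he, tsum_mul_left, tailNat]
    · rw [if_neg (by omega)]
      have hinj : Function.Injective fun t : ℕ => ((t, k) : ℕ × ℕ) :=
        fun a b hab => by simpa using congrArg Prod.fst hab
      have hsummk : Summable fun t => h (t, k) := s2.comp_injective hinj
      rw [← Summable.sum_add_tsum_nat_add (k - m) hsummk]
      have e1 : ∀ i ∈ range (k - m), h (i, k) = 0 := fun i hi => by
        rw [Finset.mem_range] at hi
        exact if_neg (by omega)
      rw [Finset.sum_congr rfl e1, Finset.sum_const_zero, zero_add]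
      have e2 : ∀ i : ℕ, h (i + (k - m), k) = g k * f i := by
        intro i
        dsimp only [h]
        rw [if_pos (by omega)]
        congr 2
        omega
      rw [tsum_congr e2, tsum_mul_left, hf_sum.tsum_eq, mul_one]
  have s5 : Summable fun k => (if k ≤ m then g k * tailNat f (m - k) else g k) :=
    (s2.prod_symm.prod).congr fun k => (tsum_congr fun t => rfl).trans (s4 k)
  calc ∑' t, ∑ k ∈ range (m + t + 1), g k * f (m + t - k)
      = ∑' t, ∑' k, h (t, k) := tsum_congr fun t => (s1 t).symm
    _ = ∑' k, ∑' t, h (t, k) := (Summable.tsum_comm (f := fun t k => h (t, k)) s2).symm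
    _ = ∑' k, (if k ≤ m then g k * tailNat f (m - k) else g k) := tsum_congr s4
    _ = ∑ k ∈ range (m + 1), (if k ≤ m then g k * tailNat f (m - k) else g k)
          + ∑' i, (if i + (m + 1) ≤ m then g (i + (m + 1)) * tailNat f (m - (i + (m + 1)))
              else g (i + (m + 1))) := (Summable.sum_add_tsum_nat_add (m + 1) s5).symm
    _ = ∑ k ∈ range (m + 1), g k * tailNat f (m - k) + tailNat g (m + 1) := by
        congr 1
        · refine Finset.sum_congr rfl fun k hk => ?_
          rw [Finset.mem_range] at hk
          exact if_pos (by omega)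
        · rw [tailNat]
          apply tsum_congr
          intro i
          rw [if_neg (by omega)]
          congr 1
          omega
lemma T_eval (m : ℕ) :
    ∑ k ∈ range (m + 1), compoundGeom p f k * tailNat f (m - k)
      = tailNat f m - tailNat (compoundGeom p f) (m + 1)
        + ∑ j ∈ range m, f (m - 1 - j) * tailNat (compoundGeom p f) (j + 1) := by
  have hgs := summable_g hp hf_nonneg hf_sum
  have hgG : ∀ k : ℕ, compoundGeom p f k
      = tailNat (compoundGeom p f) k - tailNat (compoundGeom p f) (k + 1) := by
    intro k
    have := tailNat_step hgs k
    linarith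
  have hfF : ∀ s : ℕ, f s = tailNat f s - tailNat f (s + 1) := fun s => fF hf_sum s
  set g := compoundGeom p f with hgdef
  set G := tailNat (compoundGeom p f) with hGdef
  set F := tailNat f with hFdef
  have hA : ∑ k ∈ range (m + 2), G k * F (m + 1 - k)
      = ∑ k ∈ range (m + 1), G (k + 1) * F (m - k) + G 0 * F (m + 1) := by
    rw [Finset.sum_range_succ']
    congr 1
    refine Finset.sum_congr rfl fun k _ => ?_
    congr 2
    omega
  have hB : ∑ k ∈ range (m + 2), G k * F (m + 1 - k)
      = (∑ k ∈ range (m + 1), G k * F (m - k) - ∑ k ∈ range (m + 1), G k * f (m - k))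
        + G (m + 1) * F 0 := by
    rw [Finset.sum_range_succ]
    congr 1
    · rw [← Finset.sum_sub_distrib]
      refine Finset.sum_congr rfl fun k hk => ?_
      rw [Finset.mem_range] at hk
      have h1 : m + 1 - k = (m - k) + 1 := by omega
      rw [h1, hfF (m - k)]
      ring
    · congr 2
      omega
  have hC : ∑ k ∈ range (m + 1), G k * f (m - k)
      = G 0 * f m + ∑ j ∈ range m, G (j + 1) * f (m - 1 - j) := by
    rw [Finset.sum_range_succ']
    rw [add_comm]
    congr 1
    refine Finset.sum_congr rfl fun j _ => ?_
    congr 2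
    omega
  have hL : ∑ k ∈ range (m + 1), g k * F (m - k)
      = ∑ k ∈ range (m + 1), G k * F (m - k) - ∑ k ∈ range (m + 1), G (k + 1) * F (m - k) := by
    rw [← Finset.sum_sub_distrib]
    refine Finset.sum_congr rfl fun k _ => ?_
    rw [hgG k]
    ring
  have hG0 : G 0 = 1 := G0 hp hf_nonneg hf_sum
  have hF0 : F 0 = 1 := F0 hf_sum
  have hFm : F m = f m + F (m + 1) := tailNat_step hf_sum.summable m
  have hcomm : ∑ j ∈ range m, G (j + 1) * f (m - 1 - j)
      = ∑ j ∈ range m, f (m - 1 - j) * G (j + 1) :=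
    Finset.sum_congr rfl fun j _ => mul_comm _ _
  rw [hL]
  simp only [hG0, hF0, one_mul, mul_one] at hA hB hC
  rw [hcomm] at hC
  linarith [hA, hB, hC, hFm]

lemma recG (m : ℕ) : tailNat (compoundGeom p f) m
    = tailNat f m
      + (1 - p) * ∑ j ∈ range m, f (m - 1 - j) * tailNat (compoundGeom p f) (j + 1) := by
  have hgs := summable_g hp hf_nonneg hf_sum
  have hs1 : Summable fun t => p * f (m + t) := (summable_tail hf_sum.summable m).mul_left p
  have hs2 : Summable fun t => ∑ k ∈ range (m + t + 1), compoundGeom p f k * f (m + t - k) := by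
    have hbase : Summable fun t => (compoundGeom p f (m + t) - p * f (m + t)) * (1 - p)⁻¹ :=
      ((summable_tail hgs m).sub ((summable_tail hf_sum.summable m).mul_left p)).mul_right _
    exact hbase.congr fun t => (conv_eval hp hf_nonneg hf_sum (m + t)).symm
  have h1 : tailNat (compoundGeom p f) m
      = p * tailNat f m
        + (1 - p) * ∑' t : ℕ, ∑ k ∈ range (m + t + 1), compoundGeom p f k * f (m + t - k) := by
    rw [tailNat]
    have he : ∀ t : ℕ, compoundGeom p f (m + t)
        = p * f (m + t)
          + (1 - p) * ∑ k ∈ range (m + t + 1), compoundGeom p f k * f (m + t - k) :=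
      fun t => g_rec hp hf_nonneg hf_sum (m + t)
    rw [tsum_congr he, Summable.tsum_add hs1 (hs2.mul_left (1 - p)), tsum_mul_left, tsum_mul_left]
    rfl
  rw [h1, tail_conv hp hf_nonneg hf_sum m, T_eval hp hf_nonneg hf_sum m]
  ring
end Main

/-- **Equation (11) of the paper (the key identity).**
Let `X` be a random variable on `ℕ = {1, 2, …}` with distribution `f` (so `f 0 = 0`), and
let `Y = Σ_{k=1}^T X_k` be the compound geometric sum with parameter `p ∈ (0, 1)`,
`q = 1 - p`, with tail functions `F̄ n = P(X ≥ n)` and `Ḡ n = P(Y ≥ n)`.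
Then for every `n ≥ 1`:
`F̄ n (Ḡ (n+2) Ḡ n − Ḡ (n+1)²)
  = p Ḡ n (F̄ (n+2) F̄ n − F̄ (n+1)²)
    + q Σ_{k=2}^n (F̄ (n+1) f (k-1) − F̄ n f k) (Ḡ (n+1) Ḡ (n+1-k) − Ḡ n Ḡ (n+2-k))`. -/
theorem compoundGeom_key_identity
    (p : ℝ) (hp : p ∈ Set.Ioo (0 : ℝ) 1)
    (f : ℕ → ℝ) (hf0 : f 0 = 0) (hf_nonneg : ∀ n, 0 ≤ f n) (hf_sum : HasSum f 1) :
    ∀ n : ℕ, 1 ≤ n →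
      tailNat f n *
          (tailNat (compoundGeom p f) (n + 2) * tailNat (compoundGeom p f) n -
            tailNat (compoundGeom p f) (n + 1) ^ 2) =
        p * tailNat (compoundGeom p f) n *
            (tailNat f (n + 2) * tailNat f n - tailNat f (n + 1) ^ 2) +
          (1 - p) * ∑ k ∈ Finset.Icc 2 n,
            (tailNat f (n + 1) * f (k - 1) - tailNat f n * f k) *
              (tailNat (compoundGeom p f) (n + 1) * tailNat (compoundGeom p f) (n + 1 - k) -
                tailNat (compoundGeom p f) n * tailNat (compoundGeom p f) (n + 2 - k)) := by
  intro n hn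
  have hrec : ∀ s : ℕ, tailNat (compoundGeom p f) s
      = tailNat f s + (1 - p) *
          ∑ j ∈ range s, f (s - 1 - j) * tailNat (compoundGeom p f) (j + 1) :=
    fun s => recG hp hf_nonneg hf_sum s
  have hfF : ∀ s : ℕ, f s = tailNat f s - tailNat f (s + 1) := fun s => fF hf_sum s
  have hG1 : tailNat (compoundGeom p f) 1 = 1 := G1 hp hf0 hf_nonneg hf_sum
  set F := tailNat f with hF
  set G := tailNat (compoundGeom p f) with hG
  set q : ℝ := 1 - p with hq
  -- normalized recursions
  have hrec2 : G (n + 2) = F (n + 2) + q * ∑ j ∈ range (n + 1), f (n + 1 - j) * G (j + 1) := by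
    have h0 := hrec (n + 2)
    rw [Finset.sum_range_succ] at h0
    rw [Finset.sum_congr rfl (fun j (_ : j ∈ range (n + 1)) => by
        show f (n + 2 - 1 - j) * G (j + 1) = f (n + 1 - j) * G (j + 1)
        congr 2 <;> omega)] at h0
    rw [show n + 2 - 1 - (n + 1) = 0 by omega, hf0, zero_mul, add_zero] at h0
    exact h0
  have hrec1 : G (n + 1) = F (n + 1) + q * ∑ j ∈ range n, f (n - j) * G (j + 1) := by
    have h0 := hrec (n + 1)
    rw [Finset.sum_range_succ] at h0
    rw [Finset.sum_congr rfl (fun j (_ : j ∈ range n) => by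
        show f (n + 1 - 1 - j) * G (j + 1) = f (n - j) * G (j + 1)
        congr 2 <;> omega)] at h0
    rw [show n + 1 - 1 - n = 0 by omega, hf0, zero_mul, add_zero] at h0
    exact h0
  have hrec0 : G n = F n + q * ∑ j ∈ range n, f (n - 1 - j) * G (j + 1) := hrec n
  have hS1ext : ∑ j ∈ range (n + 1), f (n - j) * G (j + 1)
      = ∑ j ∈ range n, f (n - j) * G (j + 1) := by
    rw [Finset.sum_range_succ, Nat.sub_self, hf0, zero_mul, add_zero]
  have e1 : F n * G (n + 2) - F (n + 1) * G (n + 1)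
      = (F n * F (n + 2) - F (n + 1) * F (n + 1))
        + q * ∑ j ∈ range (n + 1), (F n * f (n + 1 - j) - F (n + 1) * f (n - j)) * G (j + 1) := by
    rw [hrec2, hrec1, ← hS1ext]
    have hmerge : ∑ j ∈ range (n + 1), (F n * f (n + 1 - j) - F (n + 1) * f (n - j)) * G (j + 1)
        = F n * ∑ j ∈ range (n + 1), f (n + 1 - j) * G (j + 1)
          - F (n + 1) * ∑ j ∈ range (n + 1), f (n - j) * G (j + 1) := by
      rw [Finset.mul_sum, Finset.mul_sum, ← Finset.sum_sub_distrib]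
      exact Finset.sum_congr rfl fun j _ => by ring
    rw [hmerge]
    ring
  have e2 : F n * G (n + 1) - F (n + 1) * G n
      = q * ∑ j ∈ range n, (F n * f (n - j) - F (n + 1) * f (n - 1 - j)) * G (j + 1) := by
    rw [hrec1, hrec0]
    have hmerge : ∑ j ∈ range n, (F n * f (n - j) - F (n + 1) * f (n - 1 - j)) * G (j + 1)
        = F n * ∑ j ∈ range n, f (n - j) * G (j + 1)
          - F (n + 1) * ∑ j ∈ range n, f (n - 1 - j) * G (j + 1) := by
      rw [Finset.mul_sum, Finset.mul_sum, ← Finset.sum_sub_distrib]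
      exact Finset.sum_congr rfl fun j _ => by ring
    rw [hmerge]
    ring
  have e3 : ∑ j ∈ range (n + 1), (F n * f (n + 1 - j) - F (n + 1) * f (n - j)) * G (j + 1)
      = ∑ j ∈ range n, (F n * f (n - j) - F (n + 1) * f (n - 1 - j)) * G (j + 2)
        + (F n * f (n + 1) - F (n + 1) * f n) := by
    rw [Finset.sum_range_succ']
    congr 1
    · refine Finset.sum_congr rfl fun j _ => ?_
      have h1 : n + 1 - (j + 1) = n - j := by omega
      have h2 : n - (j + 1) = n - 1 - j := by omega
      rw [h1, h2]
    · simp only [Nat.sub_zero, Nat.add_sub_cancel, zero_add, hG1, mul_one]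
  have e4 : F n * f (n + 1) - F (n + 1) * f n
      = -(F n * F (n + 2) - F (n + 1) * F (n + 1)) := by
    rw [hfF (n + 1), hfF n]
    ring
  have emerge : G n * ∑ j ∈ range n, (F n * f (n - j) - F (n + 1) * f (n - 1 - j)) * G (j + 2)
      - G (n + 1) * ∑ j ∈ range n, (F n * f (n - j) - F (n + 1) * f (n - 1 - j)) * G (j + 1)
      = ∑ j ∈ range n, (F n * f (n - j) - F (n + 1) * f (n - 1 - j))
          * (G n * G (j + 2) - G (n + 1) * G (j + 1)) := by
    rw [Finset.mul_sum, Finset.mul_sum, ← Finset.sum_sub_distrib]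
    exact Finset.sum_congr rfl fun j _ => by ring
  have hidx : n - 1 + 1 = n := by omega
  have esplit : ∑ j ∈ range n, (F n * f (n - j) - F (n + 1) * f (n - 1 - j))
          * (G n * G (j + 2) - G (n + 1) * G (j + 1))
      = ∑ j ∈ range (n - 1), (F n * f (n - j) - F (n + 1) * f (n - 1 - j))
          * (G n * G (j + 2) - G (n + 1) * G (j + 1)) := by
    rw [show range n = range (n - 1 + 1) by rw [hidx], Finset.sum_range_succ]
    have hz : (F n * f (n - (n - 1)) - F (n + 1) * f (n - 1 - (n - 1)))
        * (G n * G (n - 1 + 2) - G (n + 1) * G (n - 1 + 1)) = 0 := by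
      rw [show n - 1 + 2 = n + 1 by omega, hidx]
      ring
    rw [hz, add_zero]
  have ebij : ∑ k ∈ Finset.Icc 2 n,
        (F (n + 1) * f (k - 1) - F n * f k) * (G (n + 1) * G (n + 1 - k) - G n * G (n + 2 - k))
      = ∑ j ∈ range (n - 1), (F n * f (n - j) - F (n + 1) * f (n - 1 - j))
          * (G n * G (j + 2) - G (n + 1) * G (j + 1)) := by
    refine Finset.sum_nbij' (fun k => n - k) (fun j => n - j) ?_ ?_ ?_ ?_ ?_
    · intro k hk
      rw [Finset.mem_Icc] at hk
      rw [Finset.mem_range]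
      omega
    · intro j hj
      rw [Finset.mem_range] at hj
      rw [Finset.mem_Icc]
      omega
    · intro k hk
      rw [Finset.mem_Icc] at hk
      omega
    · intro j hj
      rw [Finset.mem_range] at hj
      omega
    · intro k hk
      rw [Finset.mem_Icc] at hk
      have h1 : n - (n - k) = k := by omega
      have h2 : n - 1 - (n - k) = k - 1 := by omega
      have h3 : (n - k) + 2 = n + 2 - k := by omega
      have h4 : (n - k) + 1 = n + 1 - k := by omega
      rw [h1, h2, h3, h4]
      ring
  linear_combination
    G n * e1 - G (n + 1) * e2 + (q * G n) * e3 + (q * G n) * e4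
      + q * emerge + q * esplit - q * ebij
end

section
/- Let X be a random variable on ℕ = {1, 2, …}, p ∈ (0,1), q = 1 − p, and let Y = Σ_{k=1}^{T} X_k be the compound geometric sum, where T is geometric with P(T = n) = p q^{n−1} and X₁, X₂, … are i.i.d. copies of X independent of T. Write F̄_n = P(X ≥ n) and Ḡ_n = P(Y ≥ n). Then Ḡ₃ Ḡ₁ − Ḡ₂² = p (F̄₃ F̄₁ − F̄₂²). -/
open Finset

section Aux

variable {f : ℕ → ℝ}

lemma convPowNat_nonneg (hf : ∀ n, 0 ≤ f n) : ∀ m n, 0 ≤ convPowNat f m n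
  | 0, n => by simp only [convPowNat]; split <;> norm_num
  | m + 1, n => by
    show 0 ≤ convNat (convPowNat f m) f n
    exact Finset.sum_nonneg fun k _ => mul_nonneg (convPowNat_nonneg hf m k) (hf _)

lemma hasSum_convPowNat (hf : ∀ n, 0 ≤ f n) (hf_sum : HasSum f 1) :
    ∀ m, HasSum (convPowNat f m) 1
  | 0 => hasSum_ite_eq 0 1
  | m + 1 => by
    have IH := hasSum_convPowNat hf hf_sum m
    have hnorm1 : Summable fun n => ‖convPowNat f m n‖ := by
      simpa [Real.norm_eq_abs, abs_of_nonneg (convPowNat_nonneg hf m _)] using IH.summable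
    have hnorm2 : Summable fun n => ‖f n‖ := by
      simpa [Real.norm_eq_abs, abs_of_nonneg (hf _)] using hf_sum.summable
    have h := hasSum_sum_range_mul_of_summable_norm hnorm1 hnorm2
    rw [IH.tsum_eq, hf_sum.tsum_eq, one_mul] at h
    exact h

lemma convPowNat_eq_zero (hf0 : f 0 = 0) : ∀ m n, n < m → convPowNat f m n = 0
  | 0, n, h => absurd h (Nat.not_lt_zero n)
  | m + 1, n, h => by
    show convNat (convPowNat f m) f n = 0
    refine Finset.sum_eq_zero fun k hk => ?_
    have hk' : k ≤ n := Nat.lt_succ_iff.mp (Finset.mem_range.mp hk)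
    rcases lt_or_ge k m with hlt | hge
    · rw [convPowNat_eq_zero hf0 m k hlt, zero_mul]
    · have : n - k = 0 := by omega
      rw [this, hf0, mul_zero]

lemma convPowNat_one (f : ℕ → ℝ) (n : ℕ) : convPowNat f 1 n = f n := by
  show convNat (convPowNat f 0) f n = f n
  simp [convNat, convPowNat, ite_mul]

lemma convPowNat_two_two (hf0 : f 0 = 0) : convPowNat f 2 2 = f 1 ^ 2 := by
  show convNat (convPowNat f 1) f 2 = f 1 ^ 2
  simp [convNat, Finset.sum_range_succ, convPowNat_one, hf0]
  ring

lemma tailNat_eq {h : ℕ → ℝ} (hs : HasSum h 1) (n : ℕ) :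
    tailNat h n = 1 - ∑ i ∈ Finset.range n, h i := by
  have key := Summable.sum_add_tsum_nat_add (f := h) n hs.summable
  rw [hs.tsum_eq] at key
  unfold tailNat
  simp_rw [add_comm n]
  linarith

lemma convPowNat_le_one (hf : ∀ n, 0 ≤ f n) (hf_sum : HasSum f 1) (m n : ℕ) :
    convPowNat f m n ≤ 1 :=
  le_hasSum (hasSum_convPowNat hf hf_sum m) n fun k _ => convPowNat_nonneg hf m k

lemma sum_convPowNat_mem (hf : ∀ n, 0 ≤ f n) (hf_sum : HasSum f 1) (m n : ℕ) :
    0 ≤ 1 - ∑ i ∈ Finset.range n, convPowNat f m i ∧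
      1 - ∑ i ∈ Finset.range n, convPowNat f m i ≤ 1 := by
  constructor
  · have := sum_le_hasSum (Finset.range n) (fun i _ => convPowNat_nonneg hf m i)
      (hasSum_convPowNat hf hf_sum m)
    linarith
  · have : (0 : ℝ) ≤ ∑ i ∈ Finset.range n, convPowNat f m i :=
      Finset.sum_nonneg fun i _ => convPowNat_nonneg hf m i
    linarith

lemma summable_geom_fac {p : ℝ} (hp0 : 0 < p) (hp1 : p < 1) :
    Summable fun j : ℕ => p * (1 - p) ^ j := by
  have hq0 : (0 : ℝ) ≤ 1 - p := by linarith
  have hq1 : (1 : ℝ) - p < 1 := by linarith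
  exact (summable_geometric_of_lt_one hq0 hq1).mul_left p

lemma summable_rows {p : ℝ} (hp0 : 0 < p) (hp1 : p < 1)
    (hf : ∀ n, 0 ≤ f n) (hf_sum : HasSum f 1) (n : ℕ) :
    Summable fun j : ℕ => p * (1 - p) ^ j * (1 - ∑ i ∈ Finset.range n, convPowNat f (j + 1) i) := by
  have hq0 : (0 : ℝ) ≤ 1 - p := by linarith
  refine Summable.of_nonneg_of_le (fun j => ?_) (fun j => ?_) (summable_geom_fac hp0 hp1)
  · exact mul_nonneg (mul_nonneg hp0.le (pow_nonneg hq0 j))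
      (sum_convPowNat_mem hf hf_sum (j + 1) n).1
  · calc p * (1 - p) ^ j * (1 - ∑ i ∈ Finset.range n, convPowNat f (j + 1) i)
        ≤ p * (1 - p) ^ j * 1 := by
          exact mul_le_mul_of_nonneg_left (sum_convPowNat_mem hf hf_sum (j + 1) n).2
            (mul_nonneg hp0.le (pow_nonneg hq0 j))
      _ = p * (1 - p) ^ j := mul_one _

lemma tailNat_compoundGeom {p : ℝ} (hp0 : 0 < p) (hp1 : p < 1)
    (hf : ∀ n, 0 ≤ f n) (hf_sum : HasSum f 1) (n : ℕ) :
    tailNat (compoundGeom p f) n =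
      ∑' j : ℕ, p * (1 - p) ^ j * (1 - ∑ i ∈ Finset.range n, convPowNat f (j + 1) i) := by
  have hq0 : (0 : ℝ) ≤ 1 - p := by linarith
  have hq1 : (1 : ℝ) - p < 1 := by linarith
  set a : ℕ → ℕ → ℝ := fun j k => p * (1 - p) ^ j * convPowNat f (j + 1) (n + k) with ha
  have ha_nonneg : ∀ j k, 0 ≤ a j k := fun j k =>
    mul_nonneg (mul_nonneg hp0.le (pow_nonneg hq0 j)) (convPowNat_nonneg hf (j + 1) _)
  have hrow : ∀ j, Summable fun k => a j k := by
    intro j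
    have h1 : Summable fun k => convPowNat f (j + 1) (k + n) :=
      (summable_nat_add_iff n).mpr (hasSum_convPowNat hf hf_sum (j + 1)).summable
    have h2 : Summable fun k => convPowNat f (j + 1) (n + k) :=
      h1.congr fun k => by rw [add_comm k n]
    exact h2.mul_left _
  have hrowsum : ∀ j, ∑' k, a j k =
      p * (1 - p) ^ j * (1 - ∑ i ∈ Finset.range n, convPowNat f (j + 1) i) := by
    intro j
    have : ∑' k, a j k = p * (1 - p) ^ j * ∑' k, convPowNat f (j + 1) (n + k) := tsum_mul_left
    rw [this]
    congr 1
    exact tailNat_eq (hasSum_convPowNat hf hf_sum (j + 1)) n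
  have hcol : ∀ k, Summable fun j => a j k := by
    intro k
    refine Summable.of_nonneg_of_le (fun j => ha_nonneg j k) (fun j => ?_)
      (summable_geom_fac hp0 hp1)
    calc a j k ≤ p * (1 - p) ^ j * 1 :=
          mul_le_mul_of_nonneg_left (convPowNat_le_one hf hf_sum (j + 1) (n + k))
            (mul_nonneg hp0.le (pow_nonneg hq0 j))
      _ = p * (1 - p) ^ j := mul_one _
  have huncurry : Summable fun x : ℕ × ℕ => a x.1 x.2 := by
    refine (summable_prod_of_nonneg fun x => ha_nonneg x.1 x.2).mpr ⟨hrow, ?_⟩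
    refine Summable.of_nonneg_of_le (fun j => tsum_nonneg fun k => ha_nonneg j k)
      (fun j => ?_) (summable_geom_fac hp0 hp1)
    rw [hrowsum j]
    calc p * (1 - p) ^ j * (1 - ∑ i ∈ Finset.range n, convPowNat f (j + 1) i)
        ≤ p * (1 - p) ^ j * 1 :=
          mul_le_mul_of_nonneg_left (sum_convPowNat_mem hf hf_sum (j + 1) n).2
            (mul_nonneg hp0.le (pow_nonneg hq0 j))
      _ = p * (1 - p) ^ j := mul_one _
  have hswap : ∑' (k : ℕ) (j : ℕ), a j k = ∑' (j : ℕ) (k : ℕ), a j k :=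
    Summable.tsum_comm' huncurry hrow hcol
  have : tailNat (compoundGeom p f) n = ∑' (k : ℕ) (j : ℕ), a j k := rfl
  rw [this, hswap]
  exact tsum_congr hrowsum

end Aux

/-- **The `n = 1` case of the key identity:** `Ḡ₃ Ḡ₁ − Ḡ₂² = p (F̄₃ F̄₁ − F̄₂²)`,
where `X` is a random variable on `ℕ = {1, 2, …}` with distribution `f` (so `f 0 = 0`),
`Y` is the compound geometric sum with parameter `p ∈ (0, 1)`, and
`F̄ n = P(X ≥ n)`, `Ḡ n = P(Y ≥ n)`. -/
theorem compoundGeom_initial_identity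
    (p : ℝ) (hp : p ∈ Set.Ioo (0 : ℝ) 1)
    (f : ℕ → ℝ) (hf0 : f 0 = 0) (hf_nonneg : ∀ n, 0 ≤ f n) (hf_sum : HasSum f 1) :
    tailNat (compoundGeom p f) 3 * tailNat (compoundGeom p f) 1 -
        tailNat (compoundGeom p f) 2 ^ 2 =
      p * (tailNat f 3 * tailNat f 1 - tailNat f 2 ^ 2) := by
  obtain ⟨hp0, hp1⟩ := hp
  have hq0 : (0 : ℝ) ≤ 1 - p := by linarith
  have hq1 : (1 : ℝ) - p < 1 := by linarith
  have hgeo : ∑' j : ℕ, (1 - p) ^ j = (1 - (1 - p))⁻¹ := tsum_geometric_of_lt_one hq0 hq1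
  have hgeo' : ∑' j : ℕ, (1 - p) ^ j = p⁻¹ := by rw [hgeo]; ring_nf
  -- tails of f
  have hF1 : tailNat f 1 = 1 := by
    rw [tailNat_eq hf_sum]; simp [hf0]
  have hF2 : tailNat f 2 = 1 - f 1 := by
    rw [tailNat_eq hf_sum]; simp [Finset.sum_range_succ, hf0]
  have hF3 : tailNat f 3 = 1 - f 1 - f 2 := by
    rw [tailNat_eq hf_sum]; simp [Finset.sum_range_succ, hf0]; ring
  -- tail of g at 1
  have hG1 : tailNat (compoundGeom p f) 1 = 1 := by
    rw [tailNat_compoundGeom hp0 hp1 hf_nonneg hf_sum]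
    have : ∀ j : ℕ, p * (1 - p) ^ j *
        (1 - ∑ i ∈ Finset.range 1, convPowNat f (j + 1) i) = p * (1 - p) ^ j := by
      intro j
      rw [Finset.sum_range_one, convPowNat_eq_zero hf0 (j + 1) 0 (Nat.succ_pos j)]
      ring
    rw [tsum_congr this]
    rw [show (fun j : ℕ => p * (1 - p) ^ j) = (fun j : ℕ => p * (1 - p) ^ j) from rfl]
    rw [tsum_mul_left, hgeo']
    field_simp
  -- tail of g at 2
  have hG2 : tailNat (compoundGeom p f) 2 = p * (1 - f 1) + (1 - p) := by
    rw [tailNat_compoundGeom hp0 hp1 hf_nonneg hf_sum]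
    rw [Summable.tsum_eq_zero_add (summable_rows hp0 hp1 hf_nonneg hf_sum 2)]
    have h0 : p * (1 - p) ^ 0 * (1 - ∑ i ∈ Finset.range 2, convPowNat f (0 + 1) i)
        = p * (1 - f 1) := by
      rw [Finset.sum_range_succ, Finset.sum_range_one, convPowNat_one, convPowNat_one, hf0]
      ring
    have hrest : ∀ j : ℕ, p * (1 - p) ^ (j + 1) *
        (1 - ∑ i ∈ Finset.range 2, convPowNat f (j + 1 + 1) i) = p * (1 - p) * (1 - p) ^ j := by
      intro j
      rw [Finset.sum_range_succ, Finset.sum_range_one,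
        convPowNat_eq_zero hf0 (j + 2) 0 (by omega),
        convPowNat_eq_zero hf0 (j + 2) 1 (by omega)]
      ring
    rw [h0, tsum_congr hrest, tsum_mul_left, hgeo']
    field_simp
  -- tail of g at 3
  have hG3 : tailNat (compoundGeom p f) 3 =
      p * (1 - f 1 - f 2) + p * (1 - p) * (1 - f 1 ^ 2) + (1 - p) ^ 2 := by
    rw [tailNat_compoundGeom hp0 hp1 hf_nonneg hf_sum]
    rw [Summable.tsum_eq_zero_add (summable_rows hp0 hp1 hf_nonneg hf_sum 3)]
    have hsumm : Summable fun j : ℕ => p * (1 - p) ^ (j + 1) *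
        (1 - ∑ i ∈ Finset.range 3, convPowNat f (j + 1 + 1) i) :=
      ((summable_nat_add_iff 1).mpr (summable_rows hp0 hp1 hf_nonneg hf_sum 3))
    rw [Summable.tsum_eq_zero_add hsumm]
    have h0 : p * (1 - p) ^ 0 * (1 - ∑ i ∈ Finset.range 3, convPowNat f (0 + 1) i)
        = p * (1 - f 1 - f 2) := by
      rw [Finset.sum_range_succ, Finset.sum_range_succ, Finset.sum_range_one,
        convPowNat_one, convPowNat_one, convPowNat_one, hf0]
      ring
    have h1 : p * (1 - p) ^ (0 + 1) * (1 - ∑ i ∈ Finset.range 3, convPowNat f (0 + 1 + 1) i)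
        = p * (1 - p) * (1 - f 1 ^ 2) := by
      rw [Finset.sum_range_succ, Finset.sum_range_succ, Finset.sum_range_one]
      norm_num only
      rw [convPowNat_eq_zero hf0 2 0 (by omega), convPowNat_eq_zero hf0 2 1 (by omega),
        convPowNat_two_two hf0]
      ring
    have hrest : ∀ j : ℕ, p * (1 - p) ^ (j + 1 + 1) *
        (1 - ∑ i ∈ Finset.range 3, convPowNat f (j + 1 + 1 + 1) i)
        = p * ((1 - p) * (1 - p)) * (1 - p) ^ j := by
      intro j
      rw [Finset.sum_range_succ, Finset.sum_range_succ, Finset.sum_range_one,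
        convPowNat_eq_zero hf0 (j + 3) 0 (by omega),
        convPowNat_eq_zero hf0 (j + 3) 1 (by omega),
        convPowNat_eq_zero hf0 (j + 3) 2 (by omega)]
      ring
    rw [h0, h1, tsum_congr hrest, tsum_mul_left, hgeo']
    field_simp
    ring
  rw [hG1, hG2, hG3, hF1, hF2, hF3]
  ring
end
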